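/- arXiv:0704.0775 — 12 statements merged into one kernel-verified Lean document; each statement's English description precedes it below -/
import Mathlib

section
/- Let R be a ring, n ≥ 2, and let e and f be algebraically equivalent n-potents in R. Then there exist elements a and b of R with e = ab, f = ba, and moreover a = e^{n-1}a = af^{n-1} = e^{n-1}af^{n-1} and b = f^{n-1}b = be^{n-1} = f^{n-1}be^{n-1}. -/
private lemma aux_mul_pow {R : Type*} [Ring R] (a b : R) (k : ℕ) :
    a * (b * a) ^ k = (a * b) ^ k * a := by
  induction k with
  | zero => simp
  | succ k ih =>
    rw [pow_succ, pow_succ, ← mul_assoc, ih]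
    simp [mul_assoc]

private lemma aux_idem {R : Type*} [Ring R] (n : ℕ) (hn : 2 ≤ n) (e : R)
    (he : e ^ n = e) : e ^ (n - 1) * e ^ (n - 1) = e ^ (n - 1) := by
  have h1 : n - 1 + (n - 1) = (n - 2) + n := by omega
  have h2 : n - 2 + 1 = n - 1 := by omega
  rw [← pow_add, h1, pow_add, he, ← pow_succ, h2]

/-- If `e` and `f` are algebraically equivalent `n`-potents in a ring `R`, then the
witnesses `a`, `b` of the algebraic equivalence can be chosen so that
`a = e^(n-1) a = a f^(n-1) = e^(n-1) a f^(n-1)` and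
`b = f^(n-1) b = b e^(n-1) = f^(n-1) b e^(n-1)`. -/
theorem npotent_algEquiv_nice_witnesses {R : Type*} [Ring R] (n : ℕ) (hn : 2 ≤ n)
    (e f : R) (he : e ^ n = e) (hf : f ^ n = f)
    (h : ∃ a b : R, e = a * b ∧ f = b * a) :
    ∃ a b : R, e = a * b ∧ f = b * a ∧
      a = e ^ (n - 1) * a ∧ a = a * f ^ (n - 1) ∧ a = e ^ (n - 1) * a * f ^ (n - 1) ∧
      b = f ^ (n - 1) * b ∧ b = b * e ^ (n - 1) ∧ b = f ^ (n - 1) * b * e ^ (n - 1) := by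
  obtain ⟨a, b, hab, hba⟩ := h
  have hee := aux_idem n hn e he
  have hff := aux_idem n hn f hf
  -- key commuting identities
  have haf : a * f ^ (n - 1) = e ^ (n - 1) * a := by
    rw [hab, hba, aux_mul_pow]
  have hbe : b * e ^ (n - 1) = f ^ (n - 1) * b := by
    rw [hab, hba, aux_mul_pow]
  set a' := e ^ (n - 1) * a * f ^ (n - 1) with ha'
  set b' := f ^ (n - 1) * b * e ^ (n - 1) with hb'
  have hen : e ^ (n - 1) * e = e := by
    rw [← pow_succ, show n - 1 + 1 = n by omega, he]
  have hfn : f ^ (n - 1) * f = f := by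
    rw [← pow_succ, show n - 1 + 1 = n by omega, hf]
  have hen' : e * e ^ (n - 1) = e := by
    rw [← pow_succ', show n - 1 + 1 = n by omega, he]
  have hfn' : f * f ^ (n - 1) = f := by
    rw [← pow_succ', show n - 1 + 1 = n by omega, hf]
  refine ⟨a', b', ?_, ?_, ?_, ?_, ?_, ?_, ?_, ?_⟩
  · -- e = a' * b'
    calc e = e ^ (n - 1) * e * e ^ (n - 1) := by rw [hen, hen']
    _ = a' * b' := by
        rw [ha', hb']
        rw [show e ^ (n-1) * a * f ^ (n-1) * (f ^ (n-1) * b * e ^ (n-1))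
            = e ^ (n-1) * a * (f ^ (n-1) * f ^ (n-1)) * b * e ^ (n-1) by noncomm_ring]
        rw [hff, mul_assoc (e ^ (n-1) * a), ← hbe,
            show e ^ (n-1) * a * (b * e ^ (n-1)) * e ^ (n-1)
            = e ^ (n-1) * (a * b) * (e ^ (n-1) * e ^ (n-1)) by noncomm_ring, hee, ← hab]
  · calc f = f ^ (n - 1) * f * f ^ (n - 1) := by rw [hfn, hfn']
    _ = b' * a' := by
        rw [ha', hb']
        rw [show f ^ (n-1) * b * e ^ (n-1) * (e ^ (n-1) * a * f ^ (n-1))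
            = f ^ (n-1) * b * (e ^ (n-1) * e ^ (n-1)) * a * f ^ (n-1) by noncomm_ring]
        rw [hee, mul_assoc (f ^ (n-1) * b),
            show e ^ (n-1) * a = a * f ^ (n-1) from haf.symm,
            show f ^ (n-1) * b * (a * f ^ (n-1)) * f ^ (n-1)
            = f ^ (n-1) * (b * a) * (f ^ (n-1) * f ^ (n-1)) by noncomm_ring, hff, ← hba]
  · rw [ha', show e ^ (n-1) * (e ^ (n-1) * a * f ^ (n-1))
      = e ^ (n-1) * e ^ (n-1) * a * f ^ (n-1) by noncomm_ring, hee]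
  · rw [ha', show e ^ (n-1) * a * f ^ (n-1) * f ^ (n-1)
      = e ^ (n-1) * a * (f ^ (n-1) * f ^ (n-1)) by noncomm_ring, hff]
  · rw [ha', show e ^ (n-1) * (e ^ (n-1) * a * f ^ (n-1)) * f ^ (n-1)
      = (e ^ (n-1) * e ^ (n-1)) * a * (f ^ (n-1) * f ^ (n-1)) by noncomm_ring, hee, hff]
  · rw [hb', show f ^ (n-1) * (f ^ (n-1) * b * e ^ (n-1))
      = f ^ (n-1) * f ^ (n-1) * b * e ^ (n-1) by noncomm_ring, hff]
  · rw [hb', show f ^ (n-1) * b * e ^ (n-1) * e ^ (n-1)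
      = f ^ (n-1) * b * (e ^ (n-1) * e ^ (n-1)) by noncomm_ring, hee]
  · rw [hb', show f ^ (n-1) * (f ^ (n-1) * b * e ^ (n-1)) * e ^ (n-1)
      = (f ^ (n-1) * f ^ (n-1)) * b * (e ^ (n-1) * e ^ (n-1)) by noncomm_ring, hff, hee]
end

section
/- Let R be a ring and n ≥ 2. Algebraic equivalence is transitive on the set of n-potents of R: if e, f, g are n-potents in R with e ∼_a f and f ∼_a g, then e ∼_a g. (Concretely: if e = ab, f = ba = cd, g = dc for elements a,b,c,d of R, then there exist s, t in R with e = st and g = ts.) -/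
/-- Algebraic equivalence is transitive on the set of `n`-potents of a ring `R`. -/
theorem npotent_algEquiv_trans {R : Type*} [Ring R] (n : ℕ) (hn : 2 ≤ n)
    (e f g : R) (he : e ^ n = e) (hf : f ^ n = f) (hg : g ^ n = g)
    (hef : ∃ a b : R, e = a * b ∧ f = b * a)
    (hfg : ∃ c d : R, f = c * d ∧ g = d * c) :
    ∃ s t : R, e = s * t ∧ g = t * s := by
  obtain ⟨a, b, hab, hba⟩ := hef
  obtain ⟨c, d, hcd, hdc⟩ := hfg
  have hepow : ∀ k : ℕ, e ^ (k + 1) = a * f ^ k * b := by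
    intro k
    induction k with
    | zero => simpa using hab
    | succ k ih =>
      calc e ^ (k + 1 + 1) = e * e ^ (k + 1) := by rw [pow_succ']
        _ = a * b * (a * f ^ k * b) := by rw [ih, hab]
        _ = a * ((b * a) * f ^ k) * b := by simp only [mul_assoc]
        _ = a * f ^ (k + 1) * b := by rw [← hba, ← pow_succ']
  have hgpow : ∀ k : ℕ, g ^ (k + 1) = d * f ^ k * c := by
    intro k
    induction k with
    | zero => simpa using hdc
    | succ k ih =>
      calc g ^ (k + 1 + 1) = g ^ (k + 1) * g := by rw [pow_succ]
        _ = d * f ^ k * c * (d * c) := by rw [ih, hdc]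
        _ = d * (f ^ k * (c * d)) * c := by simp only [mul_assoc]
        _ = d * f ^ (k + 1) * c := by rw [← hcd, ← pow_succ, mul_assoc]
  have h1 : (n - 1) + 1 = n := by omega
  have h2 : (n - 2) + 1 = n - 1 := by omega
  refine ⟨a * f ^ (n - 2) * c, d * b, ?_, ?_⟩
  · calc e = e ^ n := he.symm
      _ = e ^ ((n - 1) + 1) := by rw [h1]
      _ = a * f ^ (n - 1) * b := hepow _
      _ = a * (f ^ (n - 2) * f) * b := by rw [← h2, pow_succ]
      _ = a * f ^ (n - 2) * c * (d * b) := by rw [hcd]; simp only [mul_assoc]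
  · calc g = g ^ n := hg.symm
      _ = g ^ ((n - 1) + 1) := by rw [h1]
      _ = d * f ^ (n - 1) * c := hgpow _
      _ = d * (f * f ^ (n - 2)) * c := by rw [← h2, pow_succ']
      _ = d * b * (a * f ^ (n - 2) * c) := by rw [hba]; simp only [mul_assoc]
end

section
/- Let R be a unital ring, n ≥ 2, and let e and f be algebraically equivalent n-potents in R. Then the 2×2 matrices diag(e,0) and diag(f,0) are similar in the matrix ring M_2(R): there is an invertible 2×2 matrix z over R with z · diag(e,0) · z^{-1} = diag(f,0). -/
open Matrix

/-- Auxiliary: invertibility of `1 - y + x` with inverse `1 - y + t*y` under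
relations satisfied by an `n`-potent `x` with `y = x^(n-1)`, `t = x^(n-2)`. -/
lemma npotent_unit_aux {R : Type*} [Ring R] (x y t : R) (hyy : y*y = y) (hxy : x*y = x)
    (hyx : y*x = x) (hyt : y*t = t*y) (htx : t*x = y) (hxt : x*t = y) :
    (1 - y + x) * (1 - y + t*y) = 1 ∧ (1 - y + t*y) * (1 - y + x) = 1 := by
  have h1 : y*(t*y) = t*y := by rw [← mul_assoc, hyt, mul_assoc, hyy]
  have h2 : x*(t*y) = y := by rw [← mul_assoc, hxt, hyy]
  have h3 : (t*y)*y = t*y := by rw [mul_assoc, hyy]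
  have h4 : (t*y)*x = y := by rw [mul_assoc, hyx, htx]
  constructor <;>
  · simp only [sub_mul, mul_sub, add_mul, mul_add, one_mul, mul_one, hyy, hxy, hyx, h1, h2, h3, h4]
    abel

/-- If `e` and `f` are algebraically equivalent `n`-potents in a unital ring `R`, then
`diag(e,0)` and `diag(f,0)` are similar in `M₂(R)`. -/
theorem npotent_algEquiv_stably_similar {R : Type*} [Ring R] (n : ℕ) (hn : 2 ≤ n)
    (e f : R) (he : e ^ n = e) (hf : f ^ n = f)
    (h : ∃ a b : R, e = a * b ∧ f = b * a) :
    ∃ z : (Matrix (Fin 2) (Fin 2) R)ˣ,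
      z.val * Matrix.diagonal ![e, 0] * (z⁻¹).val = Matrix.diagonal ![f, 0] := by
  obtain ⟨a, b, ha, hb⟩ := h
  obtain ⟨m, rfl⟩ : ∃ m, n = m + 2 := ⟨n - 2, by omega⟩
  -- basic power facts
  have hkey : ∀ x : R, x ^ (m+2) = x → ∀ k, x ^ (k+1) * x ^ (m+1) = x ^ (k+1) := by
    intro x hx k
    rw [← pow_add, show k+1+(m+1) = k + (m+2) by ring, pow_add, hx, ← pow_succ]
  set E := e ^ (m+1) with hE
  set F := f ^ (m+1) with hF
  have hEE : E * E = E := hkey e he m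
  have hFF : F * F = F := hkey f hf m
  have heE : e * E = e := by simpa using hkey e he 0
  have hfF : f * F = f := by simpa using hkey f hf 0
  have hEe : E * e = e := by rw [hE, ← pow_succ, he]
  have hFf : F * f = f := by rw [hF, ← pow_succ, hf]
  have hEte : E * e^m = e^m * E := by rw [hE, ← pow_add, ← pow_add, add_comm]
  have hFtf : F * f^m = f^m * F := by rw [hF, ← pow_add, ← pow_add, add_comm]
  have hte : e^m * e = E := by rw [hE, ← pow_succ]
  have het : e * e^m = E := by rw [hE, ← pow_succ']
  have htf : f^m * f = F := by rw [hF, ← pow_succ]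
  have hft : f * f^m = F := by rw [hF, ← pow_succ']
  -- the adjusted elements
  set a' := E * a * F with ha'
  set b' := F * b * E with hb'
  have hswap : a * (b*a)^(m+1) = (a*b)^(m+1) * a :=
    (show SemiconjBy a (b*a) (a*b) from (mul_assoc a b a).symm).pow_right (m+1)
  have haFb : a * F * b = e := by
    rw [hF, hb, mul_assoc, ← mul_assoc, hswap, mul_assoc, ← ha, ← pow_succ, he]
  have hswap' : b * (a*b)^(m+1) = (b*a)^(m+1) * b :=
    (show SemiconjBy b (a*b) (b*a) from (mul_assoc b a b).symm).pow_right (m+1)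
  have hbEa : b * E * a = f := by
    rw [hE, ha, mul_assoc, ← mul_assoc, hswap', mul_assoc, ← hb, ← pow_succ, hf]
  have hab' : a' * b' = e := by
    calc a' * b' = E*a*(F*F)*(b*E) := by rw [ha', hb']; noncomm_ring
    _ = E*(a*F*b)*E := by rw [hFF]; noncomm_ring
    _ = e := by rw [haFb, hEe, heE]
  have hba' : b' * a' = f := by
    calc b' * a' = F*b*(E*E)*(a*F) := by rw [ha', hb']; noncomm_ring
    _ = F*(b*E*a)*F := by rw [hEE]; noncomm_ring
    _ = f := by rw [hbEa, hFf, hfF]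
  have hb'E : b' * E = b' := by rw [hb', mul_assoc, hEE]
  have hFb' : F * b' = b' := by rw [hb', ← mul_assoc, ← mul_assoc, hFF]
  have hEa' : E * a' = a' := by rw [ha', ← mul_assoc, ← mul_assoc, hEE]
  have ha'F : a' * F = a' := by rw [ha', mul_assoc, hFF]
  have hb'e : b' * e = f * b' := by
    rw [← hab', ← mul_assoc, hba']
  -- the diagonal correction units
  obtain ⟨hu1, hu1'⟩ := npotent_unit_aux f F (f^m) hFF hfF hFf hFtf htf hft
  obtain ⟨hu2, hu2'⟩ := npotent_unit_aux e E (e^m) hEE heE hEe hEte hte het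
  set g₁ : R := 1 - F + f
  set g₂ : R := 1 - E + e
  set h₁ : R := 1 - F + f^m * F
  set h₂ : R := 1 - E + e^m * E
  -- matrices
  have hdiag : ∀ u : R, Matrix.diagonal ![u, 0] = !![u,0;0,0] := by
    intro u; ext i j; fin_cases i <;> fin_cases j <;> simp [Matrix.diagonal]
  set z : Matrix (Fin 2) (Fin 2) R := !![b', 1-F; 1-E, a'] with hz
  set w : Matrix (Fin 2) (Fin 2) R := !![a', 1-E; 1-F, b'] with hw
  have hzw : z * w = !![g₁, 0; 0, g₂] := by
    rw [hz, hw, Matrix.mul_fin_two]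
    have t1 : b'*a' + (1-F)*(1-F) = g₁ := by
      rw [hba']; simp only [mul_sub, sub_mul, mul_one, one_mul, hFF, g₁]; abel
    have t2 : b'*(1-E) + (1-F)*b' = 0 := by
      simp only [mul_sub, sub_mul, mul_one, one_mul, hb'E, hFb']; abel
    have t3 : (1-E)*a' + a'*(1-F) = 0 := by
      simp only [mul_sub, sub_mul, mul_one, one_mul, hEa', ha'F]; abel
    have t4 : (1-E)*(1-E) + a'*b' = g₂ := by
      rw [hab']; simp only [mul_sub, sub_mul, mul_one, one_mul, hEE, g₂]; abel
    rw [t1, t2, t3, t4]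
  have hwz : w * z = !![g₂, 0; 0, g₁] := by
    rw [hz, hw, Matrix.mul_fin_two]
    have t1 : a'*b' + (1-E)*(1-E) = g₂ := by
      rw [hab']; simp only [mul_sub, sub_mul, mul_one, one_mul, hEE, g₂]; abel
    have t2 : a'*(1-F) + (1-E)*a' = 0 := by
      simp only [mul_sub, sub_mul, mul_one, one_mul, hEa', ha'F]; abel
    have t3 : (1-F)*b' + b'*(1-E) = 0 := by
      simp only [mul_sub, sub_mul, mul_one, one_mul, hb'E, hFb']; abel
    have t4 : (1-F)*(1-F) + b'*a' = g₁ := by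
      rw [hba']; simp only [mul_sub, sub_mul, mul_one, one_mul, hFF, g₁]; abel
    rw [t1, t2, t3, t4]
  set v : Matrix (Fin 2) (Fin 2) R := w * !![h₁, 0; 0, h₂] with hv
  have hzv : z * v = 1 := by
    rw [hv, ← mul_assoc, hzw, Matrix.mul_fin_two, Matrix.one_fin_two]
    rw [hu1, hu2]
    simp
  set u : Matrix (Fin 2) (Fin 2) R := !![h₂, 0; 0, h₁] * w with hu
  have huz : u * z = 1 := by
    rw [hu, mul_assoc, hwz, Matrix.mul_fin_two, Matrix.one_fin_two]
    rw [hu1', hu2']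
    simp
  have huv : u = v := left_inv_eq_right_inv huz hzv
  refine ⟨⟨z, v, hzv, huv ▸ huz⟩, ?_⟩
  show z * Matrix.diagonal ![e, 0] * v = Matrix.diagonal ![f, 0]
  rw [hdiag, hdiag]
  have hcomm : z * !![e,0;0,0] = !![f,0;0,0] * z := by
    rw [hz, Matrix.mul_fin_two, Matrix.mul_fin_two]
    have t1 : (1-E)*e = 0 := by rw [sub_mul, one_mul, hEe, sub_self]
    have t2 : f*(1-F) = 0 := by rw [mul_sub, mul_one, hfF, sub_self]
    rw [hb'e, t1, t2]
    simp
  calc z * !![e,0;0,0] * v = !![f,0;0,0] * z * v := by rw [hcomm]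
  _ = !![f,0;0,0] * (z * v) := by rw [mul_assoc]
  _ = !![f,0;0,0] := by rw [hzv, mul_one]
end

section
/- Let R be a ring and n ≥ 2. For i = 1, 2, let e_i and f_i be n-potents in R with e_i algebraically equivalent to f_i. Suppose e_1 is orthogonal to e_2 and f_1 is orthogonal to f_2. Then e_1 + e_2 is algebraically equivalent to f_1 + f_2. -/
private lemma aux_sandwich {R : Type*} [Ring R] (a b : R) (k : ℕ) :
    a * (b * a) ^ k * b = (a * b) ^ (k + 1) := by
  induction k with
  | zero => simp
  | succ k ih =>
    rw [pow_succ, pow_succ, ← ih]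
    noncomm_ring

private lemma aux_pow_pow {R : Type*} [Ring R] (f : R) (m : ℕ)
    (hf : f ^ (m + 2) = f) : f ^ (m + 1) * f ^ (m + 1) = f ^ (m + 1) := by
  have : f ^ (m + 1) * f ^ (m + 1) = f ^ (m + 2) * f ^ m := by
    rw [← pow_add, ← pow_add]; ring_nf
  rw [this, hf, ← pow_succ']

private lemma aux_orth {R : Type*} [Ring R] (x y : R) (m : ℕ) (h : x * y = 0) :
    x ^ (m + 1) * y ^ (m + 1) = 0 := by
  have : x ^ (m + 1) * y ^ (m + 1) = x ^ m * (x * y) * y ^ m := by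
    rw [pow_succ, pow_succ']; noncomm_ring
  rw [this, h, mul_zero, zero_mul]

private lemma aux_key {R : Type*} [Ring R] (m : ℕ) (a b : R)
    (he : (a * b) ^ (m + 2) = a * b) (hf : (b * a) ^ (m + 2) = b * a) :
    ((a * b) ^ (m + 1) * a * (b * a) ^ (m + 1)) *
      ((b * a) ^ (m + 1) * b * (a * b) ^ (m + 1)) = a * b := by
  set e := a * b with hee
  set f := b * a with hff
  have h1 : e ^ (m + 1) * a * f ^ (m + 1) * (f ^ (m + 1) * b * e ^ (m + 1))
      = e ^ (m + 1) * (a * (f ^ (m + 1) * f ^ (m + 1)) * b) * e ^ (m + 1) := by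
    noncomm_ring
  rw [h1, aux_pow_pow f m hf]
  have h2 : a * f ^ (m + 1) * b = e := by
    rw [hff, aux_sandwich, ← hee, he]
  rw [h2, ← pow_succ, he, ← pow_succ', he]

/-- If `e₁ ∼ₐ f₁` and `e₂ ∼ₐ f₂` are `n`-potents with `e₁ ⊥ e₂` and `f₁ ⊥ f₂`, then
`e₁ + e₂` is algebraically equivalent to `f₁ + f₂`. -/
theorem npotent_algEquiv_add {R : Type*} [Ring R] (n : ℕ) (hn : 2 ≤ n)
    (e₁ e₂ f₁ f₂ : R)
    (he₁ : e₁ ^ n = e₁) (he₂ : e₂ ^ n = e₂) (hf₁ : f₁ ^ n = f₁) (hf₂ : f₂ ^ n = f₂)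
    (h₁ : ∃ a b : R, e₁ = a * b ∧ f₁ = b * a)
    (h₂ : ∃ a b : R, e₂ = a * b ∧ f₂ = b * a)
    (he : e₁ * e₂ = 0) (he' : e₂ * e₁ = 0)
    (hf : f₁ * f₂ = 0) (hf' : f₂ * f₁ = 0) :
    ∃ a b : R, e₁ + e₂ = a * b ∧ f₁ + f₂ = b * a := by
  obtain ⟨m, rfl⟩ : ∃ m, n = m + 2 := ⟨n - 2, by omega⟩
  obtain ⟨a₁, b₁, rfl, rfl⟩ := h₁
  obtain ⟨a₂, b₂, rfl, rfl⟩ := h₂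
  set p := m + 1 with hp
  refine ⟨(a₁*b₁)^p * a₁ * (b₁*a₁)^p + (a₂*b₂)^p * a₂ * (b₂*a₂)^p,
          (b₁*a₁)^p * b₁ * (a₁*b₁)^p + (b₂*a₂)^p * b₂ * (a₂*b₂)^p, ?_, ?_⟩
  · have c12 : ((a₁*b₁)^p * a₁ * (b₁*a₁)^p) * ((b₂*a₂)^p * b₂ * (a₂*b₂)^p) = 0 := by
      have : ((a₁*b₁)^p * a₁ * (b₁*a₁)^p) * ((b₂*a₂)^p * b₂ * (a₂*b₂)^p)
          = (a₁*b₁)^p * a₁ * ((b₁*a₁)^p * (b₂*a₂)^p) * (b₂ * (a₂*b₂)^p) := by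
        noncomm_ring
      rw [this, aux_orth _ _ m hf, mul_zero, zero_mul]
    have c21 : ((a₂*b₂)^p * a₂ * (b₂*a₂)^p) * ((b₁*a₁)^p * b₁ * (a₁*b₁)^p) = 0 := by
      have : ((a₂*b₂)^p * a₂ * (b₂*a₂)^p) * ((b₁*a₁)^p * b₁ * (a₁*b₁)^p)
          = (a₂*b₂)^p * a₂ * ((b₂*a₂)^p * (b₁*a₁)^p) * (b₁ * (a₁*b₁)^p) := by
        noncomm_ring
      rw [this, aux_orth _ _ m hf', mul_zero, zero_mul]
    rw [mul_add, add_mul, add_mul, aux_key m a₁ b₁ he₁ hf₁, aux_key m a₂ b₂ he₂ hf₂,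
      c12, c21]
    abel
  · have c12 : ((b₁*a₁)^p * b₁ * (a₁*b₁)^p) * ((a₂*b₂)^p * a₂ * (b₂*a₂)^p) = 0 := by
      have : ((b₁*a₁)^p * b₁ * (a₁*b₁)^p) * ((a₂*b₂)^p * a₂ * (b₂*a₂)^p)
          = (b₁*a₁)^p * b₁ * ((a₁*b₁)^p * (a₂*b₂)^p) * (a₂ * (b₂*a₂)^p) := by
        noncomm_ring
      rw [this, aux_orth _ _ m he, mul_zero, zero_mul]
    have c21 : ((b₂*a₂)^p * b₂ * (a₂*b₂)^p) * ((a₁*b₁)^p * a₁ * (b₁*a₁)^p) = 0 := by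
      have : ((b₂*a₂)^p * b₂ * (a₂*b₂)^p) * ((a₁*b₁)^p * a₁ * (b₁*a₁)^p)
          = (b₂*a₂)^p * b₂ * ((a₂*b₂)^p * (a₁*b₁)^p) * (a₁ * (b₁*a₁)^p) := by
        noncomm_ring
      rw [this, aux_orth _ _ m he', mul_zero, zero_mul]
    rw [mul_add, add_mul, add_mul, aux_key m b₁ a₁ hf₁ he₁, aux_key m b₂ a₂ hf₂ he₂,
      c12, c21]
    abel
end

section
/- Let R be a ring, n ≥ 2, and let e and f be orthogonal n-potents in R. Then in the matrix ring M_2(R), the matrix diag(e,f) is algebraically equivalent to diag(e+f, 0). -/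
open Matrix

/-- For orthogonal `n`-potents `e` and `f` in a ring `R`,
`diag(e,f)` is algebraically equivalent to `diag(e+f,0)` in `M₂(R)`. -/
theorem npotent_diag_add_algEquiv {R : Type*} [Ring R] (n : ℕ) (hn : 2 ≤ n)
    (e f : R) (he : e ^ n = e) (hf : f ^ n = f)
    (hef : e * f = 0) (hfe : f * e = 0) :
    ∃ a b : Matrix (Fin 2) (Fin 2) R,
      Matrix.diagonal ![e, f] = a * b ∧ Matrix.diagonal ![e + f, 0] = b * a := by
  obtain ⟨k, rfl⟩ : ∃ k, n = k + 2 := ⟨n - 2, by omega⟩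
  have h1 : e ^ (k + 1) * f = 0 := by
    rw [pow_succ, mul_assoc, hef, mul_zero]
  have h2 : f ^ (k + 1) * e = 0 := by
    rw [pow_succ, mul_assoc, hfe, mul_zero]
  have h3 : e ^ (k + 1) * e = e := by rw [← pow_succ]; exact he
  have h4 : f ^ (k + 1) * f = f := by rw [← pow_succ]; exact hf
  have h5 : e * e ^ (k + 1) = e := by rw [← pow_succ']; rw [pow_succ] at he ⊢; exact he
  have h6 : f * f ^ (k + 1) = f := by rw [← pow_succ']; rw [pow_succ] at hf ⊢; exact hf
  refine ⟨!![e ^ (k + 1), 0; f ^ (k + 1), 0], !![e, f; 0, 0], ?_, ?_⟩ <;>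
    · ext i j
      fin_cases i <;> fin_cases j <;>
        simp [Matrix.mul_apply, Fin.sum_univ_two, h1, h2, h3, h4, h5, h6]
end

section
/- Let n ≥ 2, let F be a field of characteristic zero containing a primitive (n−1)-th root of unity ζ, and let A be a unital associative F-algebra. Set ω_k = ζ^{k-1} for 1 ≤ k ≤ n−1. Then for every n-potent e in A there exists a unique n-tuple (e_0, e_1, …, e_{n-1}) of idempotents in A such that e_0 + e_1 + ⋯ + e_{n-1} = 1, the e_j are pairwise orthogonal (e_j e_k = 0 for j ≠ k), and e = Σ_{k=1}^{n-1} ω_k e_k. -/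
section Aux
variable {F : Type*} [Field F] [CharZero F] {A : Type*} [Ring A] [Algebra F A]

/-- The spectral idempotent candidates. -/
noncomputable def auxEk (m : ℕ) (ζ : F) (e : A) (k : ℕ) : A :=
  ∑ j ∈ Finset.range m, ((m : F)⁻¹ * (ζ⁻¹) ^ (k * (j + 1))) • e ^ (j + 1)

variable {m : ℕ} {ζ : F} {e : A}

lemma aux_keysum (hm : 1 ≤ m) (hζ : IsPrimitiveRoot ζ m) {a b : ℕ} (ha : a < m) (hb : b < m) :
    ∑ j ∈ Finset.range m, (ζ ^ a * (ζ⁻¹) ^ b) ^ j = if a = b then (m : F) else 0 := by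
  have hζ0 : ζ ≠ 0 := hζ.ne_zero (by omega)
  have hxm : (ζ ^ a * (ζ⁻¹) ^ b) ^ m = 1 := by
    rw [mul_pow, ← pow_mul, ← pow_mul, mul_comm a m, mul_comm b m, pow_mul, pow_mul,
      hζ.pow_eq_one, hζ.inv.pow_eq_one, one_pow, one_pow, one_mul]
  by_cases hab : a = b
  · subst hab
    rw [if_pos rfl, ← mul_pow, mul_inv_cancel₀ hζ0, one_pow]
    simp
  · rw [if_neg hab]
    have hx1 : ζ ^ a * (ζ⁻¹) ^ b ≠ 1 := by
      intro h
      apply hab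
      refine hζ.pow_inj ha hb ?_
      have : ζ ^ a * (ζ⁻¹) ^ b * ζ ^ b = ζ ^ b := by rw [h, one_mul]
      rwa [mul_assoc, inv_pow, inv_mul_cancel₀ (pow_ne_zero _ hζ0), mul_one] at this
    rw [geom_sum_eq hx1, hxm, sub_self, zero_div]

lemma aux_cyc (he : e ^ (m + 1) = e) (j : ℕ) : e ^ (j + 1 + m) = e ^ (j + 1) := by
  rw [show j + 1 + m = j + (m + 1) by ring, pow_add, he, pow_succ]

lemma aux_spec1 (hm : 1 ≤ m) (hζ : IsPrimitiveRoot ζ m) (he : e ^ (m + 1) = e)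
    {k : ℕ} (hk : k < m) : e * auxEk m ζ e k = ζ ^ k • auxEk m ζ e k := by
  obtain ⟨p, rfl⟩ : ∃ p, m = p + 1 := ⟨m - 1, by omega⟩
  have hζ0 : ζ ≠ 0 := hζ.ne_zero (by omega)
  unfold auxEk
  rw [Finset.mul_sum, Finset.smul_sum]
  rw [Finset.sum_range_succ, Finset.sum_range_succ']
  congr 1
  · refine Finset.sum_congr rfl fun j hj => ?_
    rw [mul_smul_comm, ← pow_succ', smul_smul]
    congr 1
    have : ζ ^ k * (ζ⁻¹) ^ (k * (j + 1 + 1)) = (ζ⁻¹) ^ (k * (j + 1)) := by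
      rw [show k * (j + 1 + 1) = k + k * (j + 1) by ring, pow_add, ← mul_assoc,
        inv_pow, mul_inv_cancel₀ (pow_ne_zero _ hζ0), one_mul, inv_pow]
    rw [← this]; ring
  · rw [mul_smul_comm, ← pow_succ', show p + 1 + 1 = 0 + 1 + (p + 1) by ring, aux_cyc he,
      smul_smul, pow_one]
    congr 1
    have h1 : (ζ⁻¹) ^ (k * (p + 1)) = 1 := by
      rw [mul_comm, pow_mul, hζ.inv.pow_eq_one, one_pow]
    have h2 : ζ ^ k * (ζ⁻¹) ^ (k * (0 + 1)) = 1 := by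
      rw [show k * (0 + 1) = k by ring, inv_pow, mul_inv_cancel₀ (pow_ne_zero _ hζ0)]
    rw [h1, mul_one, ← mul_assoc, mul_comm (ζ ^ k) ((↑(p+1) : F))⁻¹, mul_assoc, h2, mul_one]

lemma aux_spec (hm : 1 ≤ m) (hζ : IsPrimitiveRoot ζ m) (he : e ^ (m + 1) = e)
    (i : ℕ) {k : ℕ} (hk : k < m) :
    e ^ i * auxEk m ζ e k = (ζ ^ k) ^ i • auxEk m ζ e k := by
  induction i with
  | zero => simp
  | succ i ih =>
    rw [pow_succ', mul_assoc, ih, mul_smul_comm, aux_spec1 hm hζ he hk, smul_smul, ← pow_succ]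

lemma aux_comm (k i : ℕ) : e ^ i * auxEk m ζ e k = auxEk m ζ e k * e ^ i := by
  unfold auxEk
  rw [Finset.mul_sum, Finset.sum_mul]
  refine Finset.sum_congr rfl fun j hj => ?_
  rw [mul_smul_comm, smul_mul_assoc, ← pow_add, ← pow_add, add_comm i (j + 1)]


lemma aux_geo (hm : 1 ≤ m) (hζ : IsPrimitiveRoot ζ m) {k l : ℕ} (hk : k < m) (hl : l < m) :
    ∑ j ∈ Finset.range m, ((ζ⁻¹) ^ k * ζ ^ l) ^ (j + 1) = if l = k then (m : F) else 0 := by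
  have hζ0 : ζ ≠ 0 := hζ.ne_zero (by omega)
  have h1 : ∑ j ∈ Finset.range m, ((ζ⁻¹) ^ k * ζ ^ l) ^ (j + 1)
      = ((ζ⁻¹) ^ k * ζ ^ l) * ∑ j ∈ Finset.range m, ((ζ⁻¹) ^ k * ζ ^ l) ^ j := by
    rw [Finset.mul_sum]
    exact Finset.sum_congr rfl fun j _ => pow_succ' _ _
  rw [h1, mul_comm ((ζ⁻¹) ^ k) (ζ ^ l), aux_keysum hm hζ hl hk]
  by_cases hlk : l = k
  · subst hlk
    rw [if_pos rfl, inv_pow, mul_inv_cancel₀ (pow_ne_zero _ hζ0), one_mul]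
  · rw [if_neg hlk, mul_zero]

lemma aux_mul (hm : 1 ≤ m) (hζ : IsPrimitiveRoot ζ m) (he : e ^ (m + 1) = e)
    {k l : ℕ} (hk : k < m) (hl : l < m) :
    auxEk m ζ e k * auxEk m ζ e l = if k = l then auxEk m ζ e k else 0 := by
  have hζ0 : ζ ≠ 0 := hζ.ne_zero (by omega)
  have hm0 : (m : F) ≠ 0 := Nat.cast_ne_zero.mpr (by omega)
  conv_lhs => rw [auxEk, Finset.sum_mul]
  have hterm : ∀ j ∈ Finset.range m,
      (((m : F)⁻¹ * (ζ⁻¹) ^ (k * (j + 1))) • e ^ (j + 1)) * auxEk m ζ e l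
        = ((m : F)⁻¹ * ((ζ⁻¹) ^ k * ζ ^ l) ^ (j + 1)) • auxEk m ζ e l := by
    intro j hj
    rw [smul_mul_assoc, aux_spec hm hζ he (j + 1) hl, smul_smul]
    congr 1
    rw [mul_pow, ← pow_mul, ← pow_mul, mul_assoc]
  rw [Finset.sum_congr rfl hterm, ← Finset.sum_smul, ← Finset.mul_sum,
    aux_geo hm hζ hk hl]
  by_cases hkl : k = l
  · subst hkl
    rw [if_pos rfl, if_pos rfl, inv_mul_cancel₀ hm0, one_smul]
  · rw [if_neg hkl, if_neg (fun h => hkl h.symm), mul_zero, zero_smul]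

lemma aux_sum (hm : 1 ≤ m) (hζ : IsPrimitiveRoot ζ m) :
    ∑ k ∈ Finset.range m, auxEk m ζ e k = e ^ m := by
  have hζ0 : ζ ≠ 0 := hζ.ne_zero (by omega)
  have hm0 : (m : F) ≠ 0 := Nat.cast_ne_zero.mpr (by omega)
  unfold auxEk
  rw [Finset.sum_comm]
  have hterm : ∀ j ∈ Finset.range m,
      ∑ k ∈ Finset.range m, ((m : F)⁻¹ * (ζ⁻¹) ^ (k * (j + 1))) • e ^ (j + 1)
        = if j = m - 1 then e ^ m else 0 := by
    intro j hj
    rw [Finset.mem_range] at hj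
    rw [← Finset.sum_smul, ← Finset.mul_sum]
    by_cases hjm : j = m - 1
    · subst hjm
      have : ∀ k ∈ Finset.range m, (ζ⁻¹) ^ (k * (m - 1 + 1)) = 1 := by
        intro k _
        rw [show m - 1 + 1 = m by omega, mul_comm, pow_mul, hζ.inv.pow_eq_one, one_pow]
      rw [Finset.sum_congr rfl this, Finset.sum_const, Finset.card_range, nsmul_eq_mul,
        mul_one, inv_mul_cancel₀ hm0, one_smul, if_pos rfl, show m - 1 + 1 = m by omega]
    · have : ∀ k ∈ Finset.range m, (ζ⁻¹) ^ (k * (j + 1)) = (ζ ^ 0 * (ζ⁻¹) ^ (j + 1)) ^ k := by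
        intro k _
        rw [pow_zero, one_mul, ← pow_mul, mul_comm (j + 1) k]
      rw [Finset.sum_congr rfl this, aux_keysum hm hζ (by omega) (by omega : j + 1 < m),
        if_neg (by omega), mul_zero, zero_smul, if_neg hjm]
  rw [Finset.sum_congr rfl hterm, Finset.sum_ite_eq' (Finset.range m) (m - 1) (fun _ => e ^ m),
    if_pos (Finset.mem_range.mpr (by omega))]

lemma aux_recon (hm : 1 ≤ m) (hζ : IsPrimitiveRoot ζ m) :
    ∑ k ∈ Finset.range m, ζ ^ k • auxEk m ζ e k = e := by
  have hζ0 : ζ ≠ 0 := hζ.ne_zero (by omega)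
  have hm0 : (m : F) ≠ 0 := Nat.cast_ne_zero.mpr (by omega)
  unfold auxEk
  have hswap : ∑ k ∈ Finset.range m, ζ ^ k •
      ∑ j ∈ Finset.range m, ((m : F)⁻¹ * (ζ⁻¹) ^ (k * (j + 1))) • e ^ (j + 1)
      = ∑ j ∈ Finset.range m, ∑ k ∈ Finset.range m,
        ((m : F)⁻¹ * (ζ ^ 0 * (ζ⁻¹) ^ j) ^ k) • e ^ (j + 1) := by
    rw [Finset.sum_comm]
    refine Finset.sum_congr rfl fun k _ => ?_
    rw [Finset.smul_sum]
    refine Finset.sum_congr rfl fun j _ => ?_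
    rw [smul_smul]
    congr 1
    rw [pow_zero, one_mul, ← pow_mul]
    have : ζ ^ k * (ζ⁻¹) ^ (k * (j + 1)) = (ζ⁻¹) ^ (j * k) := by
      rw [show k * (j + 1) = k + j * k by ring, pow_add, ← mul_assoc, inv_pow,
        mul_inv_cancel₀ (pow_ne_zero _ hζ0), one_mul]
    rw [← this]; ring
  rw [hswap]
  have hterm : ∀ j ∈ Finset.range m,
      ∑ k ∈ Finset.range m, ((m : F)⁻¹ * (ζ ^ 0 * (ζ⁻¹) ^ j) ^ k) • e ^ (j + 1)
        = if j = 0 then e else 0 := by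
    intro j hj
    rw [Finset.mem_range] at hj
    rw [← Finset.sum_smul, ← Finset.mul_sum, aux_keysum hm hζ hm hj]
    by_cases hj0 : j = 0
    · subst hj0
      rw [if_pos rfl, if_pos rfl, inv_mul_cancel₀ hm0, one_smul, pow_one]
    · rw [if_neg (fun h => hj0 h.symm), if_neg hj0, mul_zero, zero_smul]
  rw [Finset.sum_congr rfl hterm, Finset.sum_ite_eq' (Finset.range m) 0 (fun _ => e),
    if_pos (Finset.mem_range.mpr (by omega))]


lemma aux_unique (hm : 1 ≤ m) (hζ : IsPrimitiveRoot ζ m)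
    (G : ℕ → A) (hidem : ∀ k < m, G k * G k = G k)
    (horth : ∀ k < m, ∀ l < m, k ≠ l → G k * G l = 0)
    (hrep : e = ∑ k ∈ Finset.range m, ζ ^ k • G k)
    {k : ℕ} (hk : k < m) : auxEk m ζ e k = G k := by
  have hζ0 : ζ ≠ 0 := hζ.ne_zero (by omega)
  have hm0 : (m : F) ≠ 0 := Nat.cast_ne_zero.mpr (by omega)
  have hpow : ∀ i, e ^ (i + 1) = ∑ l ∈ Finset.range m, (ζ ^ l) ^ (i + 1) • G l := by
    intro i
    induction i with
    | zero => simpa using hrep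
    | succ i ih =>
      have h0 : e ^ (i + 1 + 1) = e ^ (i + 1) * e := by rw [← pow_succ]
      rw [h0, ih]
      conv_lhs => rw [hrep, Finset.sum_mul]
      refine Finset.sum_congr rfl fun l hl => ?_
      rw [Finset.mul_sum, Finset.sum_eq_single l]
      · rw [smul_mul_assoc, mul_smul_comm, hidem l (Finset.mem_range.mp hl), smul_smul,
          ← pow_succ]
      · intro b hb hbl
        rw [smul_mul_assoc, mul_smul_comm,
          horth l (Finset.mem_range.mp hl) b (Finset.mem_range.mp hb) (fun h => hbl h.symm),
          smul_zero, smul_zero]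
      · intro habs
        exact absurd hl habs
  unfold auxEk
  have hstep : ∀ j ∈ Finset.range m,
      ((m : F)⁻¹ * (ζ⁻¹) ^ (k * (j + 1))) • e ^ (j + 1)
        = ∑ l ∈ Finset.range m, ((m : F)⁻¹ * ((ζ⁻¹) ^ k * ζ ^ l) ^ (j + 1)) • G l := by
    intro j hj
    rw [hpow j, Finset.smul_sum]
    refine Finset.sum_congr rfl fun l hl => ?_
    rw [smul_smul]
    congr 1
    rw [mul_pow, ← pow_mul, ← pow_mul, mul_assoc]
  rw [Finset.sum_congr rfl hstep, Finset.sum_comm]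
  have hlast : ∀ l ∈ Finset.range m,
      (∑ j ∈ Finset.range m, ((m : F)⁻¹ * ((ζ⁻¹) ^ k * ζ ^ l) ^ (j + 1)) • G l)
        = if l = k then G l else 0 := by
    intro l hl
    rw [← Finset.sum_smul, ← Finset.mul_sum, aux_geo hm hζ hk (Finset.mem_range.mp hl)]
    by_cases h : l = k
    · rw [if_pos h, if_pos h, inv_mul_cancel₀ hm0, one_smul]
    · rw [if_neg h, if_neg h, mul_zero, zero_smul]
  rw [Finset.sum_congr rfl hlast, Finset.sum_ite_eq' (Finset.range m) k (fun l => G l),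
    if_pos (Finset.mem_range.mpr hk)]

end Aux

/-- Let `F` be a field of characteristic zero containing a primitive `(n-1)`-th root of
unity `ζ` (`n ≥ 2`), and let `A` be a unital `F`-algebra.  Every `n`-potent `e` in `A`
admits a unique `n`-partition of unity `(e₀, e₁, …, e_{n-1})` (pairwise orthogonal
idempotents summing to `1`) with `e = ∑_{k=1}^{n-1} ζ^{k-1} • e_k`. -/
theorem npotent_partition_of_unity {F : Type*} [Field F] [CharZero F]
    {A : Type*} [Ring A] [Algebra F A] (n : ℕ) (hn : 2 ≤ n)
    (ζ : F) (hζ : IsPrimitiveRoot ζ (n - 1))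
    (e : A) (he : e ^ n = e) :
    ∃! E : Fin n → A,
      (∀ k, E k * E k = E k) ∧
      (∑ k, E k = 1) ∧
      (∀ j k, j ≠ k → E j * E k = 0) ∧
      e = ∑ k : Fin (n - 1), ζ ^ (k : ℕ) • E ⟨(k : ℕ) + 1, by have := k.isLt; omega⟩ := by
  obtain ⟨m, rfl⟩ : ∃ m, n = m + 1 := ⟨n - 1, by omega⟩
  have hm : 1 ≤ m := by omega
  simp only [Nat.add_sub_cancel] at hζ ⊢
  have he' : e ^ (m + 1) = e := he
  have hζ0 : ζ ≠ 0 := hζ.ne_zero (by omega)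
  have hm0 : (m : F) ≠ 0 := Nat.cast_ne_zero.mpr (by omega)
  have h2m : e ^ (m + m) = e ^ m := by
    have h := aux_cyc he' (m - 1)
    rwa [show m - 1 + 1 = m by omega] at h
  have hEmEk : ∀ k < m, e ^ m * auxEk m ζ e k = auxEk m ζ e k := by
    intro k hk
    rw [aux_spec hm hζ he' m hk, ← pow_mul, mul_comm k m, pow_mul, hζ.pow_eq_one,
      one_pow, one_smul]
  have hEkEm : ∀ k < m, auxEk m ζ e k * e ^ m = auxEk m ζ e k := by
    intro k hk
    rw [← aux_comm]
    exact hEmEk k hk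
  have hE0idem : (1 - e ^ m) * (1 - e ^ m) = 1 - e ^ m := by
    rw [mul_sub, mul_one, sub_mul, one_mul, ← pow_add, h2m]
    abel
  refine ⟨fun i => if _ : (i : ℕ) = 0 then 1 - e ^ m else auxEk m ζ e ((i : ℕ) - 1),
    ⟨?_, ?_, ?_, ?_⟩, ?_⟩
  · -- idempotents
    intro i
    dsimp only
    by_cases hi : (i : ℕ) = 0
    · rw [dif_pos hi]
      exact hE0idem
    · rw [dif_neg hi]
      have hk : (i : ℕ) - 1 < m := by have := i.isLt; omega
      rw [aux_mul hm hζ he' hk hk, if_pos rfl]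
  · -- sum to one
    dsimp only
    rw [Fin.sum_univ_succ]
    simp only [Fin.val_zero]
    simp only [↓reduceDIte]
    have hstep : ∀ k : Fin m,
        (if _ : ((Fin.succ k : Fin (m + 1)) : ℕ) = 0 then 1 - e ^ m
          else auxEk m ζ e (((Fin.succ k : Fin (m + 1)) : ℕ) - 1)) = auxEk m ζ e (k : ℕ) := by
      intro k
      rw [dif_neg (by simp [Fin.val_succ])]
      simp [Fin.val_succ]
    rw [Finset.sum_congr rfl fun k _ => hstep k,
      Fin.sum_univ_eq_sum_range (fun k => auxEk m ζ e k) m, aux_sum hm hζ]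
    abel
  · -- orthogonality
    intro i j hij
    dsimp only
    by_cases hi : (i : ℕ) = 0 <;> by_cases hj : (j : ℕ) = 0
    · exact absurd (Fin.ext (hi.trans hj.symm)) hij
    · rw [dif_pos hi, dif_neg hj, sub_mul, one_mul,
        hEmEk _ (by have := j.isLt; omega), sub_self]
    · rw [dif_neg hi, dif_pos hj, mul_sub, mul_one,
        hEkEm _ (by have := i.isLt; omega), sub_self]
    · rw [dif_neg hi, dif_neg hj,
        aux_mul hm hζ he' (by have := i.isLt; omega) (by have := j.isLt; omega),
        if_neg (by
          have hi' : (i : ℕ) ≠ 0 := hi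
          have hj' : (j : ℕ) ≠ 0 := hj
          have hne : (i : ℕ) ≠ (j : ℕ) := fun h => hij (Fin.ext h)
          omega)]
  · -- reconstruction
    dsimp only
    have hrec : (∑ k : Fin (m + 1 - 1), ζ ^ (k : ℕ) • auxEk m ζ e (k : ℕ)) = e := by
      rw [Fin.sum_univ_eq_sum_range (fun k => ζ ^ k • auxEk m ζ e k) (m + 1 - 1)]
      exact aux_recon hm hζ
    refine Eq.trans hrec.symm (Finset.sum_congr rfl fun k _ => ?_)
    rw [dif_neg (by simp)]
    simp
  · -- uniqueness
    rintro E' ⟨h1, h2, h3, h4⟩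
    set G : ℕ → A := fun k => if hk : k < m then E' ⟨k + 1, by omega⟩ else 0 with hG
    have hGsucc : ∀ k (hk : k < m), G k = E' ⟨k + 1, Nat.add_lt_add_right hk 1⟩ := by
      intro k hk
      rw [hG]
      simp only [dif_pos hk]
    have hidem : ∀ k < m, G k * G k = G k := by
      intro k hk
      rw [hGsucc k hk]
      exact h1 _
    have horth : ∀ k < m, ∀ l < m, k ≠ l → G k * G l = 0 := by
      intro k hk l hl hkl
      rw [hGsucc k hk, hGsucc l hl]
      exact h3 _ _ (by simp [Fin.ext_iff]; omega)
    have hrep : e = ∑ k ∈ Finset.range m, ζ ^ k • G k := by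
      rw [h4, ← Fin.sum_univ_eq_sum_range (fun j => ζ ^ j • G j) m]
      refine Finset.sum_congr rfl fun k _ => ?_
      have hklt : (k : ℕ) < m := k.isLt
      rw [hGsucc (k : ℕ) hklt]
    have huniq : ∀ k (hk : k < m), auxEk m ζ e k = E' ⟨k + 1, Nat.add_lt_add_right hk 1⟩ := by
      intro k hk
      rw [aux_unique hm hζ G hidem horth hrep hk, hGsucc k hk]
    have hsum' : ∑ k : Fin m, E' (Fin.succ k) = e ^ m := by
      have : ∀ k : Fin m, E' (Fin.succ k) = auxEk m ζ e (k : ℕ) := by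
        intro k
        have := huniq (k : ℕ) k.isLt
        rw [this]
        rfl
      rw [Finset.sum_congr rfl fun k _ => this k,
        Fin.sum_univ_eq_sum_range (fun k => auxEk m ζ e k) m, aux_sum hm hζ]
    have hE'0 : E' 0 = 1 - e ^ m := by
      have := h2
      rw [Fin.sum_univ_succ, hsum'] at this
      exact eq_sub_of_add_eq this
    funext i
    by_cases hi : (i : ℕ) = 0
    · rw [dif_pos hi]
      have : i = 0 := Fin.ext (by simpa using hi)
      rw [this, hE'0]
    · rw [dif_neg hi]
      have hk : (i : ℕ) - 1 < m := by have := i.isLt; omega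
      rw [huniq _ hk]
      congr 1
      exact Fin.ext (show (i : ℕ) = (i : ℕ) - 1 + 1 by omega)
end

section
/- Let A be a unital complex Banach algebra and n ≥ 2. Suppose t ↦ e_t is a norm-continuous path, defined for t in [0,1], of n-potents in A (i.e. e_t^n = e_t for all t). Then e_0 is similar to e_1: there is an invertible z in A with z e_0 z^{-1} = e_1. -/
open Finset

private def Zel {A : Type*} [Ring A] (n : ℕ) (f e : A) : A :=
  (∑ k ∈ Finset.range (n - 1), f ^ (k + 1) * e ^ (n - 1 - k)) +
    (1 - f ^ (n - 1)) * (1 - e ^ (n - 1))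

private lemma pow_red {A : Type*} [Ring A] {e : A} {n : ℕ} (hn : 2 ≤ n)
    (he : e ^ n = e) {a : ℕ} (ha : 1 ≤ a) : e ^ (a + (n - 1)) = e ^ a := by
  obtain ⟨b, rfl⟩ := Nat.exists_eq_add_of_le ha
  have h1 : 1 + b + (n - 1) = b + n := by omega
  rw [h1, pow_add, he, ← pow_succ, Nat.add_comm 1 b]

private lemma Zel_intertwine {A : Type*} [Ring A] {e f : A} {n : ℕ} (hn : 2 ≤ n)
    (he : e ^ n = e) (hf : f ^ n = f) :
    Zel n f e * e = f * Zel n f e := by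
  have hq1 : n - 1 + 1 = n := by omega
  unfold Zel
  rw [add_mul, mul_add]
  have he0 : (1 - e ^ (n - 1)) * e = 0 := by
    rw [sub_mul, one_mul, ← pow_succ, hq1, he, sub_self]
  have hf0 : f * (1 - f ^ (n - 1)) = 0 := by
    rw [mul_sub, mul_one, ← pow_succ', hq1, hf, sub_self]
  have h2 : (1 - f ^ (n - 1)) * (1 - e ^ (n - 1)) * e = 0 := by
    rw [mul_assoc, he0, mul_zero]
  have h3 : f * ((1 - f ^ (n - 1)) * (1 - e ^ (n - 1))) = 0 := by
    rw [← mul_assoc, hf0, zero_mul]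
  rw [h2, h3, add_zero, add_zero, Finset.sum_mul, Finset.mul_sum]
  set F : ℕ → A := fun j => f ^ (j + 1) * e ^ (n - j) with hF
  have hL : ∀ k ∈ Finset.range (n - 1), f ^ (k + 1) * e ^ (n - 1 - k) * e = F k := by
    intro k hk
    have hk' : k < n - 1 := Finset.mem_range.mp hk
    have : n - 1 - k + 1 = n - k := by omega
    rw [hF, mul_assoc, ← pow_succ, this]
  have hR : ∀ k ∈ Finset.range (n - 1),
      f * (f ^ (k + 1) * e ^ (n - 1 - k)) = F (k + 1) := by
    intro k hk
    have : n - 1 - k = n - (k + 1) := by omega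
    rw [hF, ← mul_assoc, ← pow_succ', this]
  rw [Finset.sum_congr rfl hL, Finset.sum_congr rfl hR]
  obtain ⟨m, hm⟩ : ∃ m, n - 1 = m + 1 := ⟨n - 2, by omega⟩
  rw [hm, Finset.sum_range_succ' F, Finset.sum_range_succ (fun k => F (k + 1))]
  have hF0 : F 0 = f * e := by
    show f ^ (0 + 1) * e ^ (n - 0) = f * e
    rw [pow_one, Nat.sub_zero, he]
  have hFm : F (m + 1) = f * e := by
    show f ^ (m + 1 + 1) * e ^ (n - (m + 1)) = f * e
    rw [(by omega : m + 1 + 1 = n), (by omega : n - (m + 1) = 1), hf, pow_one]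
  rw [hF0, hFm]

private lemma Zel_self_isUnit {A : Type*} [Ring A] [Algebra ℂ A] {e : A} {n : ℕ}
    (hn : 2 ≤ n) (he : e ^ n = e) : IsUnit (Zel n e e) := by
  set p : A := e ^ (n - 1) with hpdef
  set d : ℂ := ((n - 1 : ℕ) : ℂ) with hd
  have hd0 : d ≠ 0 := by
    rw [hd]; exact_mod_cast (by omega : (n - 1 : ℕ) ≠ 0)
  have hpp : p * p = p := by
    rw [hpdef, ← pow_add]; exact pow_red hn he (by omega)
  have hpe : p * e = e := by
    rw [hpdef, ← pow_succ, (by omega : n - 1 + 1 = n), he]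
  have hep : e * p = e := by
    rw [hpdef, ← pow_succ', (by omega : n - 1 + 1 = n), he]
  set m : ℕ := 2 * n - 3 with hmdef
  have hme : e ^ m * e = p := by
    rw [← pow_succ, hpdef]
    have : m + 1 = (n - 1) + (n - 1) := by omega
    rw [this, pow_add, ← hpdef, hpp]
  have hem : e * e ^ m = p := by
    rw [← pow_succ', hpdef]
    have : m + 1 = (n - 1) + (n - 1) := by omega
    rw [this, pow_add, ← hpdef, hpp]
  have hmp : e ^ m * p = e ^ m := by
    rw [hpdef, ← pow_add]; exact pow_red hn he (by omega)
  have hpm : p * e ^ m = e ^ m := by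
    rw [hpdef, ← pow_add, Nat.add_comm]; exact pow_red hn he (by omega)
  have hz : Zel n e e = d • e + (1 - p) := by
    unfold Zel
    have hsum : ∀ k ∈ Finset.range (n - 1), e ^ (k + 1) * e ^ (n - 1 - k) = e := by
      intro k hk
      have hk' : k < n - 1 := Finset.mem_range.mp hk
      rw [← pow_add, (by omega : k + 1 + (n - 1 - k) = n), he]
    rw [Finset.sum_congr rfl hsum, Finset.sum_const, Finset.card_range]
    have h1 : (1 - p) * (1 - p) = 1 - p := by
      rw [sub_mul, one_mul, mul_sub, mul_one, hpp]; abel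
    rw [← hpdef, h1, hd, Nat.cast_smul_eq_nsmul]
  set w : A := d⁻¹ • e ^ m + (1 - p) with hwdef
  have key1 : e ^ m * (1 - p) = 0 := by rw [mul_sub, mul_one, hmp, sub_self]
  have key2 : (1 - p) * e = 0 := by rw [sub_mul, one_mul, hpe, sub_self]
  have key3 : (1 - p) * (1 - p) = 1 - p := by
    rw [sub_mul, one_mul, mul_sub, mul_one, hpp]; abel
  have key4 : e * (1 - p) = 0 := by rw [mul_sub, mul_one, hep, sub_self]
  have key5 : (1 - p) * e ^ m = 0 := by rw [sub_mul, one_mul, hpm, sub_self]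
  have hinv : d⁻¹ * d = 1 := inv_mul_cancel₀ hd0
  have hwz : w * Zel n e e = 1 := by
    rw [hz, hwdef, add_mul, mul_add, mul_add, smul_mul_assoc, mul_smul_comm,
      smul_smul, hinv, one_smul, hme, smul_mul_assoc, key1, smul_zero,
      mul_smul_comm, key2, smul_zero, key3]
    abel
  have hzw : Zel n e e * w = 1 := by
    rw [hz, hwdef, add_mul, mul_add, mul_add, smul_mul_assoc, mul_smul_comm,
      smul_smul, mul_inv_cancel₀ hd0, one_smul, hem, smul_mul_assoc, key4,
      smul_zero, mul_smul_comm, key5, smul_zero, key3]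
    abel
  exact ⟨⟨Zel n e e, w, hzw, hwz⟩, rfl⟩

/-- If `t ↦ e t` is a norm-continuous path of `n`-potents in a unital complex Banach
algebra `A`, defined on `[0,1]`, then `e 0` is similar to `e 1`. -/
theorem npotent_homotopy_implies_similar {A : Type*} [NormedRing A] [NormedAlgebra ℂ A]
    [CompleteSpace A] (n : ℕ) (hn : 2 ≤ n)
    (e : ℝ → A) (hcont : ContinuousOn e (Set.Icc 0 1))
    (hpot : ∀ t ∈ Set.Icc (0 : ℝ) 1, (e t) ^ n = e t) :
    ∃ z : Aˣ, z.val * e 0 * (z⁻¹).val = e 1 := by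
  classical
  set π : ℝ → ℝ := fun t => max 0 (min t 1) with hπdef
  have hπmem : ∀ t, π t ∈ Set.Icc (0 : ℝ) 1 := fun t =>
    ⟨le_max_left _ _, max_le (by norm_num) (min_le_right _ _)⟩
  have hπcont : Continuous π := continuous_const.max (continuous_id.min continuous_const)
  set g : ℝ → A := fun t => e (π t) with hgdef
  have hgc : Continuous g := hcont.comp_continuous hπcont hπmem
  have hgpot : ∀ t, (g t) ^ n = g t := fun t => hpot _ (hπmem t)
  have hπ0 : π 0 = 0 := by simp [hπdef]
  have hπ1 : π 1 = 1 := by simp [hπdef]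
  have hg0 : g 0 = e 0 := by rw [hgdef]; simp only [hπ0]
  have hg1 : g 1 = e 1 := by rw [hgdef]; simp only [hπ1]
  set S : Set ℝ := {t | ∃ z : Aˣ, z.val * g 0 * (z⁻¹).val = g t} with hSdef
  have h0S : (0 : ℝ) ∈ S := ⟨1, by simp⟩
  have hZc1 : ∀ c : A, Continuous fun s => Zel n (g s) c := by
    intro c
    unfold Zel
    exact (continuous_finset_sum _ fun k _ => (hgc.pow _).mul continuous_const).add
      ((continuous_const.sub (hgc.pow _)).mul continuous_const)
  have hZc2 : ∀ c : A, Continuous fun s => Zel n c (g s) := by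
    intro c
    unfold Zel
    exact (continuous_finset_sum _ fun k _ => continuous_const.mul (hgc.pow _)).add
      (continuous_const.mul (continuous_const.sub (hgc.pow _)))
  have hopen : IsOpen S := by
    rw [isOpen_iff_mem_nhds]
    rintro t ⟨z, hz⟩
    have hU : IsOpen {s : ℝ | IsUnit (Zel n (g s) (g t))} :=
      Units.isOpen.preimage (hZc1 (g t))
    have htU : t ∈ {s : ℝ | IsUnit (Zel n (g s) (g t))} :=
      Zel_self_isUnit hn (hgpot t)
    refine Filter.mem_of_superset (hU.mem_nhds htU) ?_
    rintro s (hs : IsUnit _)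
    obtain ⟨u, hu⟩ := hs
    have hint : (u : A) * g t = g s * u := by
      rw [hu]; exact Zel_intertwine hn (hgpot t) (hgpot s)
    refine ⟨u * z, ?_⟩
    have : (↑(u * z) : A) * g 0 * (↑(u * z)⁻¹ : A)
        = ↑u * (↑z * g 0 * ↑z⁻¹) * ↑u⁻¹ := by
      rw [mul_inv_rev]
      simp only [Units.val_mul, mul_assoc]
    rw [this, hz, hint, mul_assoc, Units.mul_inv, mul_one]
  have hclosed : IsClosed S := by
    refine isClosed_of_closure_subset ?_
    intro t ht
    have hU : IsOpen {s : ℝ | IsUnit (Zel n (g t) (g s))} :=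
      Units.isOpen.preimage (hZc2 (g t))
    have htU : t ∈ {s : ℝ | IsUnit (Zel n (g t) (g s))} :=
      Zel_self_isUnit hn (hgpot t)
    obtain ⟨s, hsU, hsS⟩ := _root_.mem_closure_iff.mp ht _ hU htU
    obtain ⟨z, hz⟩ := hsS
    obtain ⟨u, hu⟩ := hsU
    have hint : (u : A) * g s = g t * u := by
      rw [hu]; exact Zel_intertwine hn (hgpot s) (hgpot t)
    refine ⟨u * z, ?_⟩
    have : (↑(u * z) : A) * g 0 * (↑(u * z)⁻¹ : A)
        = ↑u * (↑z * g 0 * ↑z⁻¹) * ↑u⁻¹ := by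
      rw [mul_inv_rev]
      simp only [Units.val_mul, mul_assoc]
    rw [this, hz, hint, mul_assoc, Units.mul_inv, mul_one]
  have hSuniv : S = Set.univ := IsClopen.eq_univ (s := S) ⟨hclosed, hopen⟩ ⟨0, h0S⟩
  have h1S : (1 : ℝ) ∈ S := hSuniv ▸ Set.mem_univ 1
  obtain ⟨z, hz⟩ := h1S
  exact ⟨z, by rwa [hg0, hg1] at hz⟩
end

section
/- Let A be a unital complex Banach algebra, n ≥ 2, and let e and f be similar n-potents in A. Then there is a norm-continuous path t ↦ E_t, t in [0,1], of n-potents in the matrix algebra M_2(A) with E_0 = diag(e,0) and E_1 = diag(f,0); that is, diag(e,0) and diag(f,0) are homotopic through n-potents in M_2(A). -/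
open Matrix

/-- If `e` and `f` are similar `n`-potents in a unital complex Banach algebra `A`, then
`diag(e,0)` and `diag(f,0)` are homotopic through `n`-potents in `M₂(A)`: there is a
continuous path `t ↦ E t`, `t ∈ [0,1]`, of `n`-potents in `M₂(A)` with
`E 0 = diag(e,0)` and `E 1 = diag(f,0)`. -/
theorem npotent_similar_implies_stably_homotopic {A : Type*} [NormedRing A]
    [NormedAlgebra ℂ A] [CompleteSpace A] (n : ℕ) (hn : 2 ≤ n)
    (e f : A) (he : e ^ n = e) (hf : f ^ n = f)
    (hs : ∃ z : Aˣ, z.val * e * (z⁻¹).val = f) :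
    ∃ E : ℝ → Matrix (Fin 2) (Fin 2) A,
      ContinuousOn E (Set.Icc 0 1) ∧
      (∀ t ∈ Set.Icc (0 : ℝ) 1, (E t) ^ n = E t) ∧
      E 0 = Matrix.diagonal ![e, 0] ∧ E 1 = Matrix.diagonal ![f, 0] := by
  classical
  obtain ⟨z, hz⟩ := hs
  
  set zv : A := z.val with hzv
  set zi : A := (z⁻¹).val with hzi
  have hz1 : zv * zi = 1 := z.mul_inv
  have hz2 : zi * zv = 1 := z.inv_mul
  set v12 : A → Matrix (Fin 2) (Fin 2) A := fun a => !![1, a; 0, 1] with hv12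
  set v21 : A → Matrix (Fin 2) (Fin 2) A := fun a => !![1, 0; a, 1] with hv21
  have m12 : ∀ a b : A, v12 a * v12 b = v12 (a + b) := by
    intro a b
    ext i j
    fin_cases i <;> fin_cases j <;>
      simp [hv12, Matrix.mul_apply, Fin.sum_univ_two, add_comm]
  have m21 : ∀ a b : A, v21 a * v21 b = v21 (a + b) := by
    intro a b
    ext i j
    fin_cases i <;> fin_cases j <;>
      simp [hv21, Matrix.mul_apply, Fin.sum_univ_two, add_comm]
  have v12zero : v12 0 = 1 := by
    ext i j
    fin_cases i <;> fin_cases j <;> simp [hv12, Matrix.one_apply]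
  have v21zero : v21 0 = 1 := by
    ext i j
    fin_cases i <;> fin_cases j <;> simp [hv21, Matrix.one_apply]
  let u12 : A → (Matrix (Fin 2) (Fin 2) A)ˣ := fun a =>
    ⟨v12 a, v12 (-a), by rw [m12, add_neg_cancel, v12zero],
      by rw [m12, neg_add_cancel, v12zero]⟩
  let u21 : A → (Matrix (Fin 2) (Fin 2) A)ˣ := fun a =>
    ⟨v21 a, v21 (-a), by rw [m21, add_neg_cancel, v21zero],
      by rw [m21, neg_add_cancel, v21zero]⟩
  have u12zero : u12 0 = 1 := by
    apply Units.ext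
    exact v12zero
  have u21zero : u21 0 = 1 := by
    apply Units.ext
    exact v21zero
  set u : ℝ → (Matrix (Fin 2) (Fin 2) A)ˣ := fun t =>
    u12 (t • zv) * u21 (-(t • zi)) * u12 (t • zv) *
      u12 (-(t • (1:A))) * u21 (t • (1:A)) * u12 (-(t • (1:A))) with hu
  set D : Matrix (Fin 2) (Fin 2) A := Matrix.diagonal ![e, 0] with hD
  set E : ℝ → Matrix (Fin 2) (Fin 2) A := fun t => (u t).val * D * ((u t)⁻¹).val with hE
  -- the diagonal unit at time 1
  have wmul1 : (Matrix.diagonal ![zv, zi] : Matrix (Fin 2) (Fin 2) A) * Matrix.diagonal ![zi, zv] = 1 := by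
    ext i j
    fin_cases i <;> fin_cases j <;>
      simp [Matrix.mul_apply, Fin.sum_univ_two, Matrix.diagonal, Matrix.one_apply, hz1, hz2]
  have wmul2 : (Matrix.diagonal ![zi, zv] : Matrix (Fin 2) (Fin 2) A) * Matrix.diagonal ![zv, zi] = 1 := by
    ext i j
    fin_cases i <;> fin_cases j <;>
      simp [Matrix.mul_apply, Fin.sum_univ_two, Matrix.diagonal, Matrix.one_apply, hz1, hz2]
  let w : (Matrix (Fin 2) (Fin 2) A)ˣ := ⟨Matrix.diagonal ![zv, zi], Matrix.diagonal ![zi, zv], wmul1, wmul2⟩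
  -- value of u 1
  have hs1 : v12 zv * v21 (-zi) = !![0, zv; -zi, 1] := by
    ext i j
    fin_cases i <;> fin_cases j <;>
      simp [hv12, hv21, Matrix.mul_apply, Fin.sum_univ_two, hz1]
  have hs2 : (!![0, zv; -zi, 1] : Matrix (Fin 2) (Fin 2) A) * v12 zv = !![0, zv; -zi, 0] := by
    ext i j
    fin_cases i <;> fin_cases j <;>
      simp [hv12, Matrix.mul_apply, Fin.sum_univ_two, hz2]
  have hs6 : (!![0, zv; -zi, 0] : Matrix (Fin 2) (Fin 2) A) * v12 (-1 : A) * v21 1 * v12 (-1 : A)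
      = Matrix.diagonal ![zv, zi] := by
    have h1 : (!![0, zv; -zi, 0] : Matrix (Fin 2) (Fin 2) A) * v12 (-1 : A) = !![0, zv; -zi, zi] := by
      ext i j
      fin_cases i <;> fin_cases j <;>
        simp [hv12, Matrix.mul_apply, Fin.sum_univ_two]
    have h2 : (!![0, zv; -zi, zi] : Matrix (Fin 2) (Fin 2) A) * v21 1 = !![zv, zv; 0, zi] := by
      ext i j
      fin_cases i <;> fin_cases j <;>
        simp [hv21, Matrix.mul_apply, Fin.sum_univ_two]
    have h3 : (!![zv, zv; 0, zi] : Matrix (Fin 2) (Fin 2) A) * v12 (-1 : A)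
        = Matrix.diagonal ![zv, zi] := by
      ext i j
      fin_cases i <;> fin_cases j <;>
        simp [hv12, Matrix.mul_apply, Fin.sum_univ_two, Matrix.diagonal]
    rw [h1, h2, h3]
  have hu1 : u 1 = w := by
    apply Units.ext
    show (u 1).val = Matrix.diagonal ![zv, zi]
    have : (u 1).val = v12 zv * v21 (-zi) * v12 zv * v12 (-1 : A) * v21 1 * v12 (-1 : A) := by
      simp [hu, Units.val_mul, u12, u21]
    rw [this, hs1, hs2, hs6]
  have hu0 : u 0 = 1 := by
    simp [hu, u12zero, u21zero]
  refine ⟨E, ?_, ?_, ?_, ?_⟩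
  · -- continuity
    apply Continuous.continuousOn
    have h12c : ∀ g : ℝ → A, Continuous g → Continuous fun t => v12 (g t) := by
      intro g hg
      apply continuous_matrix
      intro i j
      fin_cases i <;> fin_cases j <;> simp [hv12] <;> fun_prop
    have h21c : ∀ g : ℝ → A, Continuous g → Continuous fun t => v21 (g t) := by
      intro g hg
      apply continuous_matrix
      intro i j
      fin_cases i <;> fin_cases j <;> simp [hv21] <;> fun_prop
    have hgv : Continuous fun t : ℝ => t • zv := by fun_prop
    have hgvn : Continuous fun t : ℝ => -(t • zv) := by fun_prop
    have hgi : Continuous fun t : ℝ => t • zi := by fun_prop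
    have hgin : Continuous fun t : ℝ => -(t • zi) := by fun_prop
    have hg1 : Continuous fun t : ℝ => t • (1 : A) := by fun_prop
    have hg1n : Continuous fun t : ℝ => -(t • (1 : A)) := by fun_prop
    have hcu : Continuous fun t => (u t).val := by
      have : (fun t => (u t).val) = fun t =>
          v12 (t • zv) * v21 (-(t • zi)) * v12 (t • zv) *
            v12 (-(t • (1:A))) * v21 (t • (1:A)) * v12 (-(t • (1:A))) := by
        funext t
        simp [hu, Units.val_mul, u12, u21]
      rw [this]
      exact ((((((h12c _ hgv).matrix_mul (h21c _ hgin)).matrix_mul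
        (h12c _ hgv)).matrix_mul (h12c _ hg1n)).matrix_mul
        (h21c _ hg1)).matrix_mul (h12c _ hg1n))
    have hcui : Continuous fun t => ((u t)⁻¹).val := by
      have : (fun t => ((u t)⁻¹).val) = fun t =>
          v12 (t • (1:A)) * v21 (-(t • (1:A))) * v12 (t • (1:A)) *
            v12 (-(t • zv)) * v21 (t • zi) * v12 (-(t • zv)) := by
        funext t
        simp [hu, _root_.mul_inv_rev, Units.val_mul, u12, u21, mul_assoc]
      rw [this]
      exact ((((((h12c _ hg1).matrix_mul (h21c _ hg1n)).matrix_mul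
        (h12c _ hg1)).matrix_mul (h12c _ hgvn)).matrix_mul
        (h21c _ hgi)).matrix_mul (h12c _ hgvn))
    exact (hcu.matrix_mul continuous_const).matrix_mul hcui
  · -- n-potency
    intro t _
    have hDn : D ^ n = D := by
      have hv : (![e, 0] : Fin 2 → A) ^ n = ![e, 0] := by
        funext i
        fin_cases i <;>
          simp [Pi.pow_apply, he, zero_pow (by omega : n ≠ 0)]
      rw [hD, Matrix.diagonal_pow, hv]
    calc (E t) ^ n = (u t).val * D ^ n * ((u t)⁻¹).val := Units.conj_pow _ _ _
    _ = E t := by rw [hDn]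
  · show (u 0).val * D * ((u 0)⁻¹).val = Matrix.diagonal ![e, 0]
    rw [hu0, hD]
    simp
  · have hinv1 : ((u 1)⁻¹).val = Matrix.diagonal ![zi, zv] := by
      rw [hu1]; rfl
    have hval1 : (u 1).val = Matrix.diagonal ![zv, zi] := by
      rw [hu1]
    rw [hE]
    show (u 1).val * D * ((u 1)⁻¹).val = Matrix.diagonal ![f, 0]
    rw [hval1, hinv1, hD, Matrix.diagonal_mul_diagonal, Matrix.diagonal_mul_diagonal]
    ext i j
    fin_cases i <;> fin_cases j <;> simp [Matrix.diagonal, hz]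
end

section
/- Let A be a unital C*-algebra, n ≥ 3, and let e be an element of A. Then e is a normal n-potent (i.e. e^n = e and e*e = ee*) if and only if e is a partial isometry satisfying e = e e* e and e* = e^{n-2}. -/
open Polynomial in
/-- In a unital C*-algebra `A` with `n ≥ 3`, an element `e` is a normal `n`-potent if and
only if `e` is a partial isometry with `e = e e* e` and `e* = e^(n-2)`. -/
theorem normal_npotent_iff_partial_isometry {A : Type*} [NormedRing A] [StarRing A]
    [CStarRing A] [NormedAlgebra ℂ A] [CompleteSpace A] [StarModule ℂ A]
    (n : ℕ) (hn : 3 ≤ n) (e : A) :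
    (e ^ n = e ∧ star e * e = e * star e) ↔
      (e = e * star e * e ∧ star e = e ^ (n - 2)) := by
  letI : CStarAlgebra A := ⟨⟩
  obtain hA | hA := subsingleton_or_nontrivial A
  · constructor <;> intro _ <;> exact ⟨Subsingleton.elim _ _, Subsingleton.elim _ _⟩
  constructor
  · rintro ⟨hpot, hnorm⟩
    have hnormal : IsStarNormal e := ⟨by rw [commute_iff_eq]; exact hnorm⟩
    -- spectrum consists of roots of z^n = z
    have hspec : ∀ z ∈ spectrum ℂ e, z ^ n = z := by
      intro z hz
      have := spectrum.subset_polynomial_aeval e (X ^ n - X : ℂ[X]) ⟨z, hz, rfl⟩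
      simp only [map_sub, aeval_X_pow, aeval_X, hpot, sub_self] at this
      have h0 : spectrum ℂ (0 : A) = {0} := by
        simpa using spectrum.singleton_eq (0 : ℂ) (A := A)
      rw [h0] at this
      simp only [eval_sub, eval_pow, eval_X, Set.mem_singleton_iff, sub_eq_zero] at this
      exact this
    -- star e = e ^ (n - 2) via functional calculus
    have hstar : star e = e ^ (n - 2) := by
      have h1 : cfc (star · : ℂ → ℂ) e = star e := cfc_star_id e
      have h2 : cfc (· ^ (n - 2) : ℂ → ℂ) e = e ^ (n - 2) := cfc_pow_id e (n - 2)
      rw [← h1, ← h2]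
      apply cfc_congr
      intro z hz
      have hz' := hspec z hz
      rcases eq_or_ne z 0 with rfl | hz0
      · have : 1 ≤ n - 2 := by omega
        simp [zero_pow (by omega : n - 2 ≠ 0)]
      · -- z ^ (n-1) = 1, so |z| = 1 and conj z = z⁻¹ = z^(n-2)
        have hz1 : z ^ (n - 1) = 1 := by
          have : z ^ (n - 1) * z = z := by
            rw [← pow_succ]
            have : n - 1 + 1 = n := by omega
            rw [this, hz']
          field_simp at this
          exact this
        have habs : ‖z‖ = 1 := by
          have h := congrArg norm hz1
          rw [norm_pow, norm_one] at h
          have h' : ‖z‖ ^ (n - 1) = 1 ^ (n - 1) := by rw [one_pow]; exact h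
          exact (pow_left_inj₀ (norm_nonneg z) zero_le_one
            (by omega : n - 1 ≠ 0)).mp h'
        have hsz : star z * z = 1 := by
          have h := Complex.mul_conj z
          rw [Complex.star_def, mul_comm, h, Complex.normSq_eq_norm_sq, habs]
          norm_num
        show star z = z ^ (n - 2)
        calc star z = star z * z ^ (n - 1) := by rw [hz1, mul_one]
          _ = star z * (z * z ^ (n - 2)) := by
              rw [← pow_succ', (by omega : n - 2 + 1 = n - 1)]
          _ = (star z * z) * z ^ (n - 2) := by ring
          _ = z ^ (n - 2) := by rw [hsz, one_mul]
    refine ⟨?_, hstar⟩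
    rw [hstar, ← pow_succ' , ← pow_succ]
    have : n - 2 + 1 + 1 = n := by omega
    rw [this, hpot]
  · rintro ⟨hpi, hstar⟩
    have hn2 : n - 2 + 1 + 1 = n := by omega
    constructor
    · calc e ^ n = e * e ^ (n - 2) * e := by rw [← pow_succ', ← pow_succ, hn2]
        _ = e * star e * e := by rw [hstar]
        _ = e := hpi.symm
    · rw [hstar, ← pow_succ, ← pow_succ']
end

section
/- Let A be a unital C*-algebra and n ≥ 2. Then every n-potent in A is similar to a normal n-potent: for each e in A with e^n = e there exist an invertible z in A and an element f with f^n = f, f*f = ff*, and z e z^{-1} = f. -/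
open scoped NNReal

/-- Every `n`-potent in a unital C*-algebra is similar to a normal `n`-potent. -/
theorem npotent_similar_to_normal {A : Type*} [NormedRing A] [StarRing A]
    [CStarRing A] [NormedAlgebra ℂ A] [CompleteSpace A] [StarModule ℂ A]
    (n : ℕ) (hn : 2 ≤ n) (e : A) (he : e ^ n = e) :
    ∃ (z : Aˣ) (f : A), f ^ n = f ∧ star f * f = f * star f ∧
      z.val * e * (z⁻¹).val = f := by
  letI : CStarAlgebra A := ⟨⟩
  letI := CStarAlgebra.spectralOrder A
  haveI := CStarAlgebra.spectralOrderedRing A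
  -- `a * (b * x) = c * x` from `a * b = c`
  have mulx : ∀ {a b c : A}, a * b = c → ∀ x : A, a * (b * x) = c * x := by
    intro a b c h x; rw [← mul_assoc, h]
  -- commuting with a unit gives commuting with its inverse
  have inv_comm : ∀ (u : Aˣ) (x : A), x * ↑u = ↑u * x → x * ↑u⁻¹ = (↑u⁻¹ : A) * x := by
    intro u x hx
    calc x * ↑u⁻¹ = ↑u⁻¹ * ↑u * x * ↑u⁻¹ := by rw [u.inv_mul, one_mul]
      _ = ↑u⁻¹ * x * ↑u * ↑u⁻¹ := by rw [mul_assoc (↑u⁻¹ : A), ← hx, ← mul_assoc]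
      _ = ↑u⁻¹ * x := by rw [mul_assoc, u.mul_inv, mul_one]
  -- the inverse of a selfadjoint unit is selfadjoint
  have star_inv : ∀ u : Aˣ, star (↑u : A) = ↑u → star ((↑u⁻¹ : A)) = ↑u⁻¹ := by
    intro u hu
    have h := congrArg star u.inv_mul
    rw [star_mul, star_one, hu] at h
    exact (Units.inv_eq_of_mul_eq_one_right h).symm
  obtain ⟨l, rfl⟩ : ∃ l, n = l + 1 + 1 := ⟨n - 2, by omega⟩
  set p := e ^ (l + 1) with hpdef
  have hpe : p * e = e := by rw [hpdef, ← pow_succ]; exact he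
  have hep : e * p = e := by rw [hpdef, ← pow_succ']; exact he
  have hp2 : p * p = p := by
    rw [hpdef, ← pow_add]
    have : (l + 1) + (l + 1) = (l + 1 + 1) + l := by ring
    rw [this, pow_add, he, ← pow_succ']
  -- Step 1 : conjugate the idempotent `p` to a projection `q`
  have hsp2 : star p * star p = star p := by rw [← star_mul, hp2]
  set h₁ : A := 1 + star (p - star p) * (p - star p) with h1def
  have hdd : star (p - star p) * (p - star p) = star p * p + p * star p - star p - p := by
    simp only [star_sub, star_star]
    rw [sub_mul, mul_sub, mul_sub, hp2, hsp2]
    abel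
  have h1unit : IsUnit h₁ :=
    CStarAlgebra.isUnit_of_le 1
      (le_add_of_nonneg_right (star_mul_self_nonneg _))
  obtain ⟨u₁, hu₁⟩ := h1unit
  have h1sa : star h₁ = h₁ := by
    rw [h1def]; simp [star_mul, star_star]
  have hph1 : p * h₁ = p * (star p * p) := by
    rw [h1def, hdd]
    simp only [mul_add, mul_sub, mul_one, mul_assoc, mulx hp2, hp2]
    abel
  have hh1p : h₁ * p = p * (star p * p) := by
    rw [h1def, hdd]
    simp only [add_mul, sub_mul, one_mul, mul_assoc, hp2]
    abel
  have hph1' : p * h₁ = h₁ * p := hph1.trans hh1p.symm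
  have hsph1' : star p * h₁ = h₁ * star p := by
    have h := congrArg star hph1'
    rw [star_mul, star_mul, h1sa] at h
    exact h.symm
  have hU1 : h₁ * ↑u₁⁻¹ = 1 := by rw [← hu₁]; exact u₁.mul_inv
  have hU1' : (↑u₁⁻¹ : A) * h₁ = 1 := by rw [← hu₁]; exact u₁.inv_mul
  have hpu : p * ↑u₁⁻¹ = (↑u₁⁻¹ : A) * p := inv_comm u₁ p (by rw [hu₁]; exact hph1')
  have hppu : (p * star p) * ↑u₁⁻¹ = (↑u₁⁻¹ : A) * (p * star p) := by
    refine inv_comm u₁ _ ?_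
    rw [hu₁]
    calc (p * star p) * h₁ = p * (star p * h₁) := mul_assoc _ _ _
      _ = p * (h₁ * star p) := by rw [hsph1']
      _ = (p * h₁) * star p := (mul_assoc _ _ _).symm
      _ = (h₁ * p) * star p := by rw [hph1']
      _ = h₁ * (p * star p) := mul_assoc _ _ _
  have hu1inv_sa : star ((↑u₁⁻¹ : A)) = ↑u₁⁻¹ := star_inv u₁ (by rw [hu₁]; exact h1sa)
  set q : A := p * star p * ↑u₁⁻¹ with hqdef
  have hq_sa : star q = q := by
    rw [hqdef, star_mul, star_mul, hu1inv_sa, star_star]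
    exact hppu.symm
  have hqp : q * p = p := by
    calc q * p = p * (star p * (↑u₁⁻¹ * p)) := by rw [hqdef]; simp only [mul_assoc]
      _ = p * (star p * (p * ↑u₁⁻¹)) := by rw [← hpu]
      _ = p * (star p * p) * ↑u₁⁻¹ := by simp only [mul_assoc]
      _ = p * h₁ * ↑u₁⁻¹ := by rw [← hph1]
      _ = p := by rw [mul_assoc, hU1, mul_one]
  have hpq : p * q = q := by
    rw [hqdef, ← mul_assoc, ← mul_assoc, hp2]
  have hqq : q * q = q := by
    calc q * q = (q * p) * (star p * ↑u₁⁻¹) := by rw [hqdef]; simp only [mul_assoc]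
      _ = p * (star p * ↑u₁⁻¹) := by rw [hqp]
      _ = q := by rw [hqdef, mul_assoc]
  -- the similarity implementing `p ↦ q`
  have wmul : (1 + p - q) * (1 - p + q) = 1 := by
    simp only [add_mul, sub_mul, mul_add, mul_sub, mul_one, one_mul, hp2, hqq, hpq, hqp]
    abel
  have wmul' : (1 - p + q) * (1 + p - q) = 1 := by
    simp only [add_mul, sub_mul, mul_add, mul_sub, mul_one, one_mul, hp2, hqq, hpq, hqp]
    abel
  set w : Aˣ := ⟨1 + p - q, 1 - p + q, wmul, wmul'⟩ with hwdef
  have hwv : (↑w : A) = 1 + p - q := rfl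
  have hwp : (↑w : A) * p = p := by
    rw [hwv, sub_mul, add_mul, one_mul, hp2, hqp]; abel
  have hqw : q * (↑w : A) = p := by
    rw [hwv, mul_sub, mul_add, mul_one, hqp, hqq]; abel
  set f₁ : A := ↑w * e * ↑w⁻¹ with hf1def
  have hf1pow : ∀ k : ℕ, f₁ ^ k = ↑w * e ^ k * ↑w⁻¹ := fun k => Units.conj_pow w e k
  have hf1n : f₁ ^ (l + 1 + 1) = f₁ := by rw [hf1pow, he, hf1def]
  have hf1m : f₁ ^ (l + 1) = q := by
    rw [hf1pow, ← hpdef, hwp, ← hqw]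
    exact Units.mul_inv_cancel_right q w
  have hpow_absorb : ∀ j : ℕ, f₁ ^ (j + 1) * q = f₁ ^ (j + 1) := by
    intro j
    rw [← hf1m, ← pow_add]
    have : j + 1 + (l + 1) = j + (l + 1 + 1) := by ring
    rw [this, pow_add, hf1n, ← pow_succ]
  -- Step 2 : averaging trick to make the conjugated element normal
  set c : A := ∑ k ∈ Finset.range l, star (f₁ ^ (k + 1)) * f₁ ^ (k + 1) with hcdef
  have hcnn : (0 : A) ≤ c := Finset.sum_nonneg fun k _ => star_mul_self_nonneg _
  set h₂ : A := 1 + c with h2def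
  have h2unit : IsUnit h₂ :=
    CStarAlgebra.isUnit_of_le 1 (le_add_of_nonneg_right hcnn)
  obtain ⟨u₂, hu₂⟩ := h2unit
  have h2nn : (0 : A) ≤ h₂ := zero_le_one.trans (le_add_of_nonneg_right hcnn)
  set s : A := CFC.sqrt h₂ with hsdef
  have hs2 : s * s = h₂ := by rw [hsdef, ← pow_two]; exact CFC.sq_sqrt _ h2nn
  have hssa : star s = s := IsSelfAdjoint.of_nonneg (hsdef ▸ CFC.sqrt_nonneg h₂)
  have hsh2 : s * h₂ = h₂ * s := by rw [← hs2]; exact (mul_assoc s s s).symm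
  have hsinv : s * ↑u₂⁻¹ = (↑u₂⁻¹ : A) * s := inv_comm u₂ s (by rw [hu₂]; exact hsh2)
  set us : Aˣ := ⟨s, s * ↑u₂⁻¹,
    by rw [← mul_assoc, hs2, ← hu₂]; exact u₂.mul_inv,
    by rw [hsinv, mul_assoc, hs2, ← hu₂]; exact u₂.inv_mul⟩ with husdef
  have husval : (↑us : A) = s := rfl
  have husinv : (↑us⁻¹ : A) = s * ↑u₂⁻¹ := rfl
  -- the key identity `f₁* h₂ f₁ = h₂ q`
  have hterm : ∀ k : ℕ, star f₁ * (star (f₁ ^ (k + 1)) * f₁ ^ (k + 1)) * f₁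
      = star (f₁ ^ (k + 1 + 1)) * f₁ ^ (k + 1 + 1) := by
    intro k
    calc star f₁ * (star (f₁ ^ (k + 1)) * f₁ ^ (k + 1)) * f₁
        = (star f₁ * star (f₁ ^ (k + 1))) * (f₁ ^ (k + 1) * f₁) := by
          simp only [mul_assoc]
      _ = star (f₁ ^ (k + 1) * f₁) * (f₁ ^ (k + 1) * f₁) := by
          rw [← star_mul]
      _ = star (f₁ ^ (k + 1 + 1)) * f₁ ^ (k + 1 + 1) := by rw [← pow_succ]
  have hqG : star (f₁ ^ (l + 1)) * f₁ ^ (l + 1) = q := by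
    rw [hf1m, hq_sa, hqq]
  have key : star f₁ * h₂ * f₁ = h₂ * q := by
    have lhs_eq : star f₁ * h₂ * f₁
        = ∑ j ∈ Finset.range (l + 1), star (f₁ ^ (j + 1)) * f₁ ^ (j + 1) := by
      rw [h2def, hcdef, mul_add, mul_one, add_mul, Finset.mul_sum, Finset.sum_mul]
      simp only [hterm]
      rw [Finset.sum_range_succ' (fun j => star (f₁ ^ (j + 1)) * f₁ ^ (j + 1)) l]
      simp only [zero_add, pow_one]
      abel
    have rhs_eq : h₂ * q
        = ∑ j ∈ Finset.range (l + 1), star (f₁ ^ (j + 1)) * f₁ ^ (j + 1) := by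
      rw [h2def, hcdef, add_mul, one_mul, Finset.sum_mul]
      simp only [mul_assoc, hpow_absorb]
      rw [Finset.sum_range_succ (fun j => star (f₁ ^ (j + 1)) * f₁ ^ (j + 1)) l]
      rw [hqG]
      abel
    exact lhs_eq.trans rhs_eq.symm
  have key' : ∀ x : A, star f₁ * (h₂ * (f₁ * x)) = h₂ * (q * x) := by
    intro x
    rw [← mul_assoc, ← mul_assoc, key, mul_assoc]
  have hinvh2 : ∀ x : A, (↑us⁻¹ : A) * (h₂ * x) = s * x := by
    intro x
    rw [husinv, mul_assoc, ← mul_assoc (↑u₂⁻¹ : A), ← hu₂, u₂.inv_mul, one_mul]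
  -- the normal n-potent
  set f : A := ↑us * f₁ * ↑us⁻¹ with hfdef
  have hfpow : ∀ k : ℕ, f ^ k = ↑us * f₁ ^ k * ↑us⁻¹ := fun k => Units.conj_pow us f₁ k
  have hfn : f ^ (l + 1 + 1) = f := by rw [hfpow, hf1n, hfdef]
  have husinv_sa : star (↑us⁻¹ : A) = ↑us⁻¹ := star_inv us (by rw [husval]; exact hssa)
  set Q : A := f ^ (l + 1) with hQdef
  have hQval : Q = ↑us * q * ↑us⁻¹ := by rw [hQdef, hfpow, hf1m]
  have hstarf : star f = ↑us⁻¹ * (star f₁ * s) := by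
    rw [hfdef, star_mul, star_mul, husinv_sa, husval, hssa]
  have hsff : star f * f = Q := by
    rw [hstarf, hfdef, hQval, husval]
    calc (s * ↑u₂⁻¹) * (star f₁ * s) * (s * f₁ * (s * ↑u₂⁻¹))
        = (s * ↑u₂⁻¹) * (star f₁ * (s * (s * (f₁ * (s * ↑u₂⁻¹))))) := by
          simp only [mul_assoc]
      _ = (s * ↑u₂⁻¹) * (star f₁ * (h₂ * (f₁ * (s * ↑u₂⁻¹)))) := by rw [mulx hs2]
      _ = (s * ↑u₂⁻¹) * (h₂ * (q * (s * ↑u₂⁻¹))) := by rw [key']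
      _ = s * (q * (s * ↑u₂⁻¹)) := hinvh2 _
      _ = s * q * (s * ↑u₂⁻¹) := (mul_assoc _ _ _).symm
  have hQsa : star Q = Q := by
    rw [← hsff, star_mul, star_star, hsff]
  have hQf : Q * f = f := by rw [hQdef, ← pow_succ, hfn]
  have hfQ : f * Q = f := by rw [hQdef, ← pow_succ', hfn]
  have hstarfQ : star f * Q = star f := by
    have h := congrArg star hQf
    rw [star_mul, hQsa] at h
    exact h
  have hl2 : star f = Q * f ^ l := by
    calc star f = star f * Q := hstarfQ.symm
      _ = star f * (f * f ^ l) := by rw [hQdef, pow_succ']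
      _ = (star f * f) * f ^ l := (mul_assoc _ _ _).symm
      _ = Q * f ^ l := by rw [hsff]
  have hffstar : f * star f = Q := by
    calc f * star f = f * (Q * f ^ l) := by rw [hl2]
      _ = (f * Q) * f ^ l := (mul_assoc _ _ _).symm
      _ = f * f ^ l := by rw [hfQ]
      _ = f ^ (l + 1) := (pow_succ' f l).symm
      _ = Q := by rw [hQdef]
  refine ⟨us * w, f, hfn, hsff.trans hffstar.symm, ?_⟩
  rw [mul_inv_rev, Units.val_mul, Units.val_mul, hfdef, hf1def]
  simp only [mul_assoc]
end

section
/- Let A be a unital C*-algebra, n ≥ 2, and let e and f be normal n-potents in A (e^n = e, f^n = f, e*e = ee*, f*f = ff*). If e and f are similar, i.e. z e z^{-1} = f for some invertible z in A, then e and f are unitarily equivalent: there exists a unitary u in A with u e u* = f. -/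
open Polynomial in
/-- For a normal `n`-potent in a unital C*-algebra, `star e = e ^ (2*n-3)`. -/
lemma star_eq_pow_of_npotent_aux {A : Type*} [CStarAlgebra A]
    [Nontrivial A] {n : ℕ} (hn : 2 ≤ n) {e : A}
    (he : e ^ n = e) (hne : IsStarNormal e) : star e = e ^ (2 * n - 3) := by
  have hspec : ∀ k ∈ spectrum ℂ e, k ^ n = k := by
    intro k hk
    have hmap := spectrum.map_polynomial_aeval e (X ^ n - X : ℂ[X])
    have h0 : (aeval e) (X ^ n - X : ℂ[X]) = 0 := by
      simp [map_sub, he]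
    rw [h0, spectrum.zero_eq] at hmap
    have hmem : (X ^ n - X : ℂ[X]).eval k ∈
        (fun k => (X ^ n - X : ℂ[X]).eval k) '' spectrum ℂ e := ⟨k, hk, rfl⟩
    rw [← hmap] at hmem
    simpa [sub_eq_zero] using hmem
  rw [← cfc_star_id (R := ℂ) (a := e) hne, ← cfc_pow_id (R := ℂ) (p := IsStarNormal) e (2 * n - 3)]
  apply cfc_congr
  intro k hk
  have hkn := hspec k hk
  by_cases hk0 : k = 0
  · simp [hk0, zero_pow (by omega : 2 * n - 3 ≠ 0)]
  · have hk1 : k ^ (n - 1) = 1 := by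
      have h : k ^ (n - 1) * k = 1 * k := by
        rw [one_mul, ← pow_succ, show n - 1 + 1 = n by omega]
        exact hkn
      exact mul_right_cancel₀ hk0 h
    have habs : ‖k‖ = 1 := by
      have h := congrArg (‖·‖) hk1
      rw [norm_pow, norm_one] at h
      rcases pow_eq_one_iff_cases.mp h with h | h | h
      · omega
      · exact h
      · exfalso; have := norm_nonneg k; rw [h.1] at this; linarith
    have hconj : (starRingEnd ℂ) k * k = 1 := by
      rw [mul_comm, Complex.mul_conj]
      norm_cast
      rw [← Complex.sq_norm, habs]; norm_num
    have hpow : k ^ (2 * n - 3) * k = 1 := by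
      have h2 : 2 * n - 3 + 1 = (n - 1) + (n - 1) := by omega
      rw [← pow_succ, h2, pow_add, hk1, one_mul]
    calc star k = star k * (k ^ (2 * n - 3) * k) := by rw [hpow, mul_one]
    _ = (star k * k) * k ^ (2 * n - 3) := by ring
    _ = k ^ (2 * n - 3) := by
          rw [show (star k : ℂ) = (starRingEnd ℂ) k from rfl, hconj, one_mul]

/-- An element commuting with a selfadjoint `t` commutes with `cfc f t`. -/
lemma commute_cfc_real {A : Type*} [CStarAlgebra A]
    {t x : A} (ht : IsSelfAdjoint t) (hx : Commute x t)
    (f : ℝ → ℝ) : Commute x (cfc f t) := by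
  by_cases hf : ContinuousOn f (spectrum ℝ t)
  · rw [cfc_apply f t ht hf]
    generalize (⟨_, hf.restrict⟩ : C(spectrum ℝ t, ℝ)) = g
    induction g using ContinuousMap.induction_on_of_compact with
    | const r =>
      have h : (ContinuousMap.const (spectrum ℝ t) r) = algebraMap ℝ C(spectrum ℝ t, ℝ) r := rfl
      rw [h, AlgHomClass.commutes]
      exact Algebra.commute_algebraMap_right r x
    | id => rw [cfcHom_id ht]; exact hx
    | star_id =>
      have h : star ((ContinuousMap.id ℝ).restrict (spectrum ℝ t)) =
          (ContinuousMap.id ℝ).restrict (spectrum ℝ t) := by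
        ext y; simp
      rw [h, cfcHom_id ht]; exact hx
    | add g₁ g₂ h₁ h₂ => rw [map_add]; exact h₁.add_right h₂
    | mul g₁ g₂ h₁ h₂ => rw [map_mul]; exact h₁.mul_right h₂
    | frequently g hg =>
      have hcl : IsClosed {g : C(spectrum ℝ t, ℝ) | Commute x (cfcHom ht g)} := by
        apply isClosed_eq
        · exact (continuous_mul_left x).comp (cfcHom_continuous ht)
        · exact (continuous_mul_right x).comp (cfcHom_continuous ht)
      exact hg.mem_of_closed hcl
  · rw [cfc_apply_of_not_continuousOn t hf]
    exact Commute.zero_right x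

/-- In a unital C*-algebra, similar normal `n`-potents are unitarily equivalent. -/
theorem normal_npotent_similar_implies_unitarily_equivalent {A : Type*} [NormedRing A]
    [StarRing A] [CStarRing A] [NormedAlgebra ℂ A] [CompleteSpace A] [StarModule ℂ A]
    (n : ℕ) (hn : 2 ≤ n) (e f : A)
    (he : e ^ n = e) (hf : f ^ n = f)
    (hne : star e * e = e * star e) (hnf : star f * f = f * star f)
    (hs : ∃ z : Aˣ, z.val * e * (z⁻¹).val = f) :
    ∃ u : A, star u * u = 1 ∧ u * star u = 1 ∧ u * e * star u = f := by
  letI : CStarAlgebra A :=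
    { ‹NormedRing A›, ‹StarRing A›, ‹CompleteSpace A›, ‹CStarRing A›,
      ‹NormedAlgebra ℂ A›, ‹StarModule ℂ A› with }
  rcases subsingleton_or_nontrivial A with hA | hA
  · exact ⟨1, Subsingleton.elim _ _, Subsingleton.elim _ _, Subsingleton.elim _ _⟩
  obtain ⟨z, hz⟩ := hs
  have hnorme : IsStarNormal e := ⟨hne⟩
  have hnormf : IsStarNormal f := ⟨hnf⟩
  have hstar_e : star e = e ^ (2 * n - 3) := star_eq_pow_of_npotent_aux hn he hnorme
  have hstar_f : star f = f ^ (2 * n - 3) := star_eq_pow_of_npotent_aux hn hf hnormf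
  -- z * e = f * z
  have hze : z.val * e = f * z.val := by
    have h := congrArg (· * z.val) hz
    simpa [mul_assoc] using h
  have hzpow : ∀ k : ℕ, z.val * e ^ k = f ^ k * z.val := by
    intro k
    induction k with
    | zero => simp
    | succ m ih =>
      rw [pow_succ, pow_succ, ← mul_assoc, ih, mul_assoc, hze, ← mul_assoc]
  -- Fuglede–Putnam step for n-potents
  have hzstar : z.val * star e = star f * z.val := by
    rw [hstar_e, hstar_f]; exact hzpow _
  have hestarz : e * star z.val = star z.val * f := by
    have h := congrArg star hzstar
    simpa [star_mul] using h
  -- t = star z * z commutes with e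
  have htsa : IsSelfAdjoint (star z.val * z.val) := by
    rw [IsSelfAdjoint, star_mul, star_star]
  have hte : Commute e (star z.val * z.val) := by
    rw [Commute, SemiconjBy]
    calc e * (star z.val * z.val) = (e * star z.val) * z.val := by rw [mul_assoc]
    _ = star z.val * (f * z.val) := by rw [hestarz, mul_assoc]
    _ = star z.val * (z.val * e) := by rw [hze]
    _ = star z.val * z.val * e := by rw [mul_assoc]
  -- s = sqrt (star z * z)
  obtain ⟨s, hssa, hss, hes⟩ : ∃ s : A, star s = s ∧ s * s = star z.val * z.val ∧ Commute e s := by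
    refine ⟨cfc Real.sqrt (star z.val * z.val), (cfc_predicate (R := ℝ) (p := IsSelfAdjoint) Real.sqrt (star z.val * z.val)).star_eq, ?_, ?_⟩
    · rw [← cfc_mul Real.sqrt Real.sqrt (star z.val * z.val)]
      have h : cfc (fun x => Real.sqrt x * Real.sqrt x) (star z.val * z.val)
          = cfc (id : ℝ → ℝ) (star z.val * z.val) := by
        apply cfc_congr
        intro r hr
        exact Real.mul_self_sqrt (spectrum_star_mul_self_nonneg r hr)
      rw [h, cfc_id ℝ (star z.val * z.val)]
    · exact commute_cfc_real htsa hte Real.sqrt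
  -- units
  set zs : Aˣ := star z with hzs_def
  have hzs_val : zs.val = star z.val := rfl
  set w : Aˣ := zs * z with hw_def
  have hw_val : w.val = star z.val * z.val := by rw [hw_def, Units.val_mul, hzs_val]
  have hsw : Commute s w.val := by
    rw [hw_val, ← hss]; exact (Commute.refl s).mul_right (Commute.refl s)
  have hsw' : Commute s (↑w⁻¹ : A) := hsw.units_inv_right
  have hew : Commute e (↑w⁻¹ : A) := by
    have h : Commute e w.val := by rw [hw_val]; exact hte
    exact h.units_inv_right
  have hw_star : star w = w := by
    apply Units.ext
    rw [Units.coe_star, hw_val]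
    exact htsa
  have hwinv_sa : star (↑w⁻¹ : A) = (↑w⁻¹ : A) := by
    rw [← Units.coe_star_inv, hw_star]
  -- s' = inverse of s
  obtain ⟨s', hs'sa, hs's, hss', hs's', hes'⟩ :
      ∃ s' : A, star s' = s' ∧ s' * s = 1 ∧ s * s' = 1 ∧ s' * s' = (↑w⁻¹ : A) ∧ Commute e s' := by
    refine ⟨s * ↑w⁻¹, ?_, ?_, ?_, ?_, hes.mul_right hew⟩
    · rw [star_mul, hwinv_sa, hssa, ← hsw'.eq]
    · rw [mul_assoc, ← hsw'.eq, ← mul_assoc, hss, ← hw_val, Units.mul_inv]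
    · rw [← mul_assoc, hss, ← hw_val, Units.mul_inv]
    · calc s * ↑w⁻¹ * (s * ↑w⁻¹) = s * (↑w⁻¹ * s) * ↑w⁻¹ := by
            simp only [mul_assoc]
      _ = s * (s * ↑w⁻¹) * ↑w⁻¹ := by rw [hsw'.eq]
      _ = (s * s) * (↑w⁻¹ * ↑w⁻¹) := by simp only [mul_assoc]
      _ = w.val * ↑w⁻¹ * ↑w⁻¹ := by rw [hss, ← hw_val, mul_assoc]
      _ = ↑w⁻¹ := by rw [Units.mul_inv, one_mul]
  refine ⟨z.val * s', ?_, ?_, ?_⟩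
  · rw [star_mul, hs'sa]
    calc s' * star z.val * (z.val * s') = s' * (star z.val * z.val) * s' := by
          simp only [mul_assoc]
    _ = s' * (s * s) * s' := by rw [hss]
    _ = (s' * s) * (s * s') := by simp only [mul_assoc]
    _ = 1 := by rw [hs's, hss', one_mul]
  · rw [star_mul, hs'sa]
    calc z.val * s' * (s' * star z.val) = z.val * (s' * s') * star z.val := by
          simp only [mul_assoc]
    _ = z.val * (↑z⁻¹ * ↑zs⁻¹) * zs.val := by rw [hs's', hw_def, mul_inv_rev, Units.val_mul, hzs_val]
    _ = (z.val * ↑z⁻¹) * (↑zs⁻¹ * zs.val) := by simp only [mul_assoc]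
    _ = 1 := by rw [Units.mul_inv, Units.inv_mul, one_mul]
  · rw [star_mul, hs'sa]
    calc z.val * s' * e * (s' * star z.val)
        = z.val * (s' * e) * (s' * star z.val) := by rw [mul_assoc z.val]
    _ = z.val * (e * s') * (s' * star z.val) := by rw [← hes'.eq]
    _ = z.val * e * (s' * s') * star z.val := by
          simp only [mul_assoc]
    _ = z.val * e * (↑z⁻¹ * ↑zs⁻¹) * zs.val := by
          rw [hs's', hw_def, mul_inv_rev, Units.val_mul, hzs_val]
    _ = (z.val * e * ↑z⁻¹) * (↑zs⁻¹ * zs.val) := by simp only [mul_assoc]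
    _ = f := by rw [hz, Units.inv_mul, mul_one]
end

section
/- Let R and S be rings, n ≥ 2, and let φ: R → S be an n-homomorphism, i.e. an additive map satisfying φ(a_1 a_2 ⋯ a_n) = φ(a_1)φ(a_2)⋯φ(a_n) for all a_1, …, a_n in R. If e and f are algebraically equivalent n-potents in R (so e^n = e, f^n = f, and e = ab, f = ba for some a, b in R), then φ(e) and φ(f) are n-potents in S that are algebraically equivalent: there exist a′, b′ in S with φ(e) = a′b′ and φ(f) = b′a′. -/
private lemma aux_pow_shift {R : Type*} [Ring R] (a b : R) :
    ∀ k : ℕ, (a * b) ^ k * a = a * (b * a) ^ k := by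
  intro k
  induction k with
  | zero => simp
  | succ k ih =>
    rw [pow_succ', mul_assoc, ih, pow_succ']
    simp [mul_assoc]

/-- An `n`-homomorphism `φ : R → S` between rings (an additive map satisfying
`φ(a₁ ⋯ aₙ) = φ(a₁) ⋯ φ(aₙ)`) sends algebraically equivalent `n`-potents to
algebraically equivalent `n`-potents. -/
theorem nhomomorphism_preserves_algEquiv {R S : Type*} [Ring R] [Ring S]
    (n : ℕ) (hn : 2 ≤ n) (φ : R → S)
    (hadd : ∀ x y : R, φ (x + y) = φ x + φ y)
    (hmul : ∀ l : List R, l.length = n → φ l.prod = (l.map φ).prod)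
    (e f : R) (he : e ^ n = e) (hf : f ^ n = f)
    (h : ∃ a b : R, e = a * b ∧ f = b * a) :
    (φ e) ^ n = φ e ∧ (φ f) ^ n = φ f ∧
      ∃ a' b' : S, φ e = a' * b' ∧ φ f = b' * a' := by
  obtain ⟨a, b, hea, hfb⟩ := h
  have hpot : ∀ x : R, x ^ n = x → (φ x) ^ n = φ x := by
    intro x hx
    have h1 := hmul (List.replicate n x) (by simp)
    rw [List.prod_replicate, hx, List.map_replicate, List.prod_replicate] at h1
    exact h1.symm
  refine ⟨hpot e he, hpot f hf, ?_⟩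
  set x : R := e ^ (n - 1) * a with hx
  set Y : List R := b :: List.replicate (n - 2) 1 with hY
  have hYlen : Y.length = n - 1 := by simp [hY]; omega
  have hYprod : Y.prod = b := by simp [hY]
  refine ⟨φ x, (Y.map φ).prod, ?_, ?_⟩
  · have hlen : (x :: Y).length = n := by simp [hYlen]; omega
    have hprod : (x :: Y).prod = e := by
      rw [List.prod_cons, hYprod, hx, mul_assoc, ← hea, ← pow_succ,
        Nat.sub_add_cancel (by omega), he]
    have h1 := hmul (x :: Y) hlen
    rw [hprod, List.map_cons, List.prod_cons] at h1
    exact h1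
  · have hlen : (Y ++ [x]).length = n := by simp [hYlen]; omega
    have hprod : (Y ++ [x]).prod = f := by
      rw [List.prod_append, hYprod, List.prod_singleton, hx, hea, ← mul_assoc,
        mul_assoc b, aux_pow_shift, ← mul_assoc, ← pow_succ',
        Nat.sub_add_cancel (by omega), ← hfb, hf]
    have h1 := hmul (Y ++ [x]) hlen
    rw [hprod, List.map_append, List.prod_append, List.map_singleton,
      List.prod_singleton] at h1
    exact h1
end
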